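/- arXiv:0802.3930 — 9 statements merged into one kernel-verified Lean document; each statement's English description precedes it below -/
import Mathlib

section
/- Let ω : [0,1] → [0,∞) be a modulus of continuity such that: for each 0 < α < 1 there exists 0 < a(α) < 1 such that x ↦ ω(x)/x^α is increasing on (0, a(α)]; x ↦ ω(x)/x is decreasing on (0,1]; and lim_{x→0⁺} ω(x)/(x·log(e/x)) = 0 (in particular ω is strictly increasing, so its inverse ω^{-1} is defined). Then there exist f ∈ Diff₀^ω[0,1] with γ(f) = 1 and a constant c(f) > 0 such that for every ε > 0 there is N with log Γ_n(f) ≥ (1−ε) · log( n / ω^{-1}(c(f)/n) ) for all n ≥ N. -/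
open Set Filter

/-- The sup norm over `[0,1]` of the derivative (within `[0,1]`) of a map. -/
noncomputable def supAbsDeriv (f : ℝ → ℝ) : ℝ :=
  sSup ((fun x => |derivWithin f (Set.Icc (0:ℝ) 1) x|) '' Set.Icc (0:ℝ) 1)

/-- `IsDiff01 f g` says that `f` is a `C¹` diffeomorphism of `[0,1]` fixing `0` and `1`,
with everywhere positive derivative, and `g` is its inverse. -/
structure IsDiff01 (f g : ℝ → ℝ) : Prop where
  mapsTo : Set.MapsTo f (Set.Icc (0:ℝ) 1) (Set.Icc (0:ℝ) 1)
  inv_mapsTo : Set.MapsTo g (Set.Icc (0:ℝ) 1) (Set.Icc (0:ℝ) 1)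
  left_inv : ∀ x ∈ Set.Icc (0:ℝ) 1, g (f x) = x
  right_inv : ∀ x ∈ Set.Icc (0:ℝ) 1, f (g x) = x
  map_zero : f 0 = 0
  map_one : f 1 = 1
  contDiffOn : ContDiffOn ℝ 1 f (Set.Icc (0:ℝ) 1)
  inv_contDiffOn : ContDiffOn ℝ 1 g (Set.Icc (0:ℝ) 1)
  deriv_pos : ∀ x ∈ Set.Icc (0:ℝ) 1, 0 < derivWithin f (Set.Icc (0:ℝ) 1) x

/-- The growth sequence `Γ_n(f) = max (‖(fⁿ)'‖_∞, ‖(f⁻ⁿ)'‖_∞)`, where `g = f⁻¹`. -/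
noncomputable def Gamma (f g : ℝ → ℝ) (n : ℕ) : ℝ :=
  max (supAbsDeriv (f^[n])) (supAbsDeriv (g^[n]))

/-- `γ(f) = lim_n Γ_n(f)^(1/n) = 1`, where `g = f⁻¹`. -/
def GammaEqOne (f g : ℝ → ℝ) : Prop :=
  Filter.Tendsto (fun n : ℕ => (Gamma f g n) ^ (1/(n:ℝ))) Filter.atTop (nhds 1)

/-- A modulus of continuity: continuous, non-decreasing, nonnegative on `[0,1]`,
vanishing at `0`, and subadditive. -/
structure IsModCont (ω : ℝ → ℝ) : Prop where
  continuousOn : ContinuousOn ω (Set.Icc (0:ℝ) 1)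
  monotoneOn : MonotoneOn ω (Set.Icc (0:ℝ) 1)
  nonneg : ∀ x ∈ Set.Icc (0:ℝ) 1, 0 ≤ ω x
  map_zero : ω 0 = 0
  subadd : ∀ a b : ℝ, 0 ≤ a → 0 ≤ b → a + b ≤ 1 → ω (a + b) ≤ ω a + ω b

/-- Membership in `Diff₀^ω[0,1]`: the derivative of `f` has modulus of continuity
controlled by `ω` up to a multiplicative constant. -/
def InDiffOmega (ω f : ℝ → ℝ) : Prop :=
  ∃ C > 0, ∀ x ∈ Set.Icc (0:ℝ) 1, ∀ y ∈ Set.Icc (0:ℝ) 1,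
    |derivWithin f (Set.Icc (0:ℝ) 1) x - derivWithin f (Set.Icc (0:ℝ) 1) y| ≤ C * ω |x - y|

open Real

noncomputable def myF (t x : ℝ) : ℝ :=
  if x ≤ 0 then x else if 1 ≤ x then x
  else 1/2 + Real.arctan (Real.tan (π * x - π/2) + t) / π

noncomputable def myD (t x : ℝ) : ℝ :=
  1 / (Real.sin (π*x)^2 + (t * Real.sin (π*x) - Real.cos (π*x))^2)

lemma myF_of_mem {t x : ℝ} (hx : x ∈ Ioo (0:ℝ) 1) :
    myF t x = 1/2 + Real.arctan (Real.tan (π * x - π/2) + t) / π := by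
  rw [myF, if_neg (by linarith [hx.1]), if_neg (by linarith [hx.2])]

lemma myF_of_nonpos {t x : ℝ} (hx : x ≤ 0) : myF t x = x := by rw [myF, if_pos hx]

lemma myF_of_one_le {t x : ℝ} (hx : 1 ≤ x) : myF t x = x := by
  rw [myF]; rcases le_or_gt x 0 with h | h
  · rw [if_pos h]
  · rw [if_neg (by linarith), if_pos hx]

lemma myF_mem_Ioo {t x : ℝ} (hx : x ∈ Ioo (0:ℝ) 1) : myF t x ∈ Ioo (0:ℝ) 1 := by
  rw [myF_of_mem hx]
  have h1 := Real.arctan_lt_pi_div_two (Real.tan (π * x - π/2) + t)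
  have h2 := Real.neg_pi_div_two_lt_arctan (Real.tan (π * x - π/2) + t)
  have hπ := Real.pi_pos
  have hu : Real.arctan (Real.tan (π * x - π/2) + t) / π < 1/2 := by
    rw [div_lt_iff₀ hπ]; linarith
  have hl : -(1/2) < Real.arctan (Real.tan (π * x - π/2) + t) / π := by
    rw [neg_lt, ← neg_div, div_lt_iff₀ hπ]; linarith
  constructor <;> [linarith; linarith]

lemma myF_comp (t s x : ℝ) : myF t (myF s x) = myF (s + t) x := by
  rcases le_or_gt x 0 with h | h
  · rw [myF_of_nonpos h, myF_of_nonpos h, myF_of_nonpos h]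
  rcases le_or_gt 1 x with h1 | h1
  · rw [myF_of_one_le h1, myF_of_one_le h1, myF_of_one_le h1]
  have hx : x ∈ Ioo (0:ℝ) 1 := ⟨h, h1⟩
  have hy := myF_mem_Ioo (t := s) hx
  rw [myF_of_mem hy, myF_of_mem (t := s) hx, myF_of_mem (t := s + t) hx]
  have hπ := Real.pi_ne_zero
  have : π * (1/2 + Real.arctan (Real.tan (π * x - π/2) + s) / π) - π/2
      = Real.arctan (Real.tan (π * x - π/2) + s) := by field_simp; ring
  rw [this, Real.tan_arctan]
  ring_nf

lemma myF_id (x : ℝ) : myF 0 x = x := by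
  rcases le_or_gt x 0 with h | h
  · rw [myF_of_nonpos h]
  rcases le_or_gt 1 x with h1 | h1
  · rw [myF_of_one_le h1]
  rw [myF_of_mem ⟨h, h1⟩]
  have hπ := Real.pi_pos
  have h2 : -(π/2) < π * x - π/2 := by nlinarith
  have h3 : π * x - π/2 < π/2 := by nlinarith
  rw [add_zero, Real.arctan_tan h2 h3]
  field_simp; ring

lemma myF_iterate (t : ℝ) (n : ℕ) (x : ℝ) : (myF t)^[n] x = myF (n * t) x := by
  induction n with
  | zero => simp [myF_id]
  | succ n ih =>
    rw [Function.iterate_succ_apply', ih, myF_comp]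
    norm_num; ring_nf

lemma denom_pos (t x : ℝ) :
    0 < Real.sin (π*x)^2 + (t * Real.sin (π*x) - Real.cos (π*x))^2 := by
  have hp : Real.sin (π*x)^2 + Real.cos (π*x)^2 = 1 := Real.sin_sq_add_cos_sq _
  rcases eq_or_ne (Real.sin (π*x)) 0 with h | h
  · rw [h] at hp ⊢; nlinarith
  · positivity

lemma myD_pos (t x : ℝ) : 0 < myD t x := by
  rw [myD]; exact div_pos one_pos (denom_pos t x)

lemma key_ineq {s c t : ℝ} (h : s^2 + c^2 = 1) (ht : 0 ≤ t) :
    1 ≤ (t+2)^2 * (s^2 + (t*s - c)^2) := by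
  rcases le_or_gt 1 ((t+2)^2 * s^2) with h1 | h1
  · nlinarith [sq_nonneg (t*s - c), sq_nonneg (t+2)]
  · -- s^2 < 1/(t+2)^2, so |c| ≥ (t+1)/(t+2), |t*s| ≤ t/(t+2)
    have ht2 : (0:ℝ) < t + 2 := by linarith
    have hs2 : s^2 < 1/(t+2)^2 := by
      rw [lt_div_iff₀ (by positivity)]; nlinarith
    have hc2 : (t+1)^2/(t+2)^2 ≤ c^2 := by
      rw [div_le_iff₀ (by positivity)]; nlinarith
    have hts : (t*s)^2 ≤ t^2/(t+2)^2 := by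
      rw [le_div_iff₀ (by positivity)]
      have : s^2 ≤ 1/(t+2)^2 := hs2.le
      nlinarith [sq_nonneg t]
    have habs : 1/(t+2) ≤ |t*s - c| := by
      have h1 : |c| ≥ (t+1)/(t+2) := by
        have := abs_nonneg c
        rw [ge_iff_le, ← Real.sqrt_sq (by positivity : (0:ℝ) ≤ (t+1)/(t+2))]
        rw [← Real.sqrt_sq_eq_abs]
        apply Real.sqrt_le_sqrt
        rw [div_pow]; exact hc2
      have h2 : |t*s| ≤ t/(t+2) := by
        have := abs_nonneg (t*s)
        rw [← Real.sqrt_sq_eq_abs, ← Real.sqrt_sq (by positivity : (0:ℝ) ≤ t/(t+2))]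
        apply Real.sqrt_le_sqrt
        rw [div_pow]; exact hts
      calc 1/(t+2) = (t+1)/(t+2) - t/(t+2) := by ring
        _ ≤ |c| - |t*s| := by linarith
        _ ≤ |c - t*s| := by
            have := abs_sub_abs_le_abs_sub c (t*s)
            linarith
        _ = |t*s - c| := abs_sub_comm _ _
    have : (1/(t+2))^2 ≤ (t*s - c)^2 := by
      rw [← sq_abs (t*s - c)]
      exact pow_le_pow_left₀ (by positivity) habs 2
    have h3 : 1/(t+2)^2 ≤ (t*s-c)^2 := by rwa [div_pow, one_pow] at this
    calc (1:ℝ) = (t+2)^2 * (1/(t+2)^2) := by field_simp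
      _ ≤ (t+2)^2 * (s^2 + (t*s-c)^2) := by
          apply mul_le_mul_of_nonneg_left _ (by positivity)
          nlinarith [sq_nonneg s]

lemma myD_le (t x : ℝ) : myD t x ≤ (|t|+2)^2 := by
  have hp : Real.sin (π*x)^2 + Real.cos (π*x)^2 = 1 := Real.sin_sq_add_cos_sq _
  set s := Real.sin (π*x); set c := Real.cos (π*x)
  have key : 1 ≤ (|t|+2)^2 * (s^2 + (t*s - c)^2) := by
    rcases le_or_gt 0 t with h | h
    · rw [abs_of_nonneg h]; exact key_ineq hp h
    · rw [abs_of_neg h]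
      have h2 : s^2 + (-c)^2 = 1 := by rw [neg_pow]; simpa using hp
      have := key_ineq (t := -t) h2 (by linarith)
      have he : (-t*s - -c)^2 = (t*s - c)^2 := by ring_nf
      rwa [he] at this
  rw [myD, div_le_iff₀ (denom_pos t x)]
  calc (1:ℝ) ≤ (|t|+2)^2 * (s^2 + (t*s - c)^2) := key
    _ = _ := by ring

lemma hasDerivAt_myF (t : ℝ) {x : ℝ} (hx : x ∈ Ioo (0:ℝ) 1) :
    HasDerivAt (myF t) (myD t x) x := by
  have hπ := Real.pi_pos
  have hs : 0 < Real.sin (π*x) := by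
    apply Real.sin_pos_of_pos_of_lt_pi (by nlinarith [hx.1])
    nlinarith [hx.2]
  have hcos : Real.cos (π*x - π/2) ≠ 0 := by
    rw [Real.cos_sub_pi_div_two]; exact hs.ne'
  have hlin : HasDerivAt (fun y : ℝ => π*y - π/2) π x := by
    simpa using ((hasDerivAt_id x).const_mul π).sub_const (π/2)
  have htan : HasDerivAt (fun y => Real.tan (π*y - π/2) + t)
      (1/Real.cos (π*x - π/2)^2 * π) x := by
    have := ((Real.hasDerivAt_tan hcos).comp x hlin).add_const t; exact this
  have harc : HasDerivAt (fun y => 1/2 + Real.arctan (Real.tan (π*y - π/2) + t) / π)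
      ((1/(1 + (Real.tan (π*x - π/2) + t)^2) * (1/Real.cos (π*x - π/2)^2 * π)) / π) x :=
    (((Real.hasDerivAt_arctan _).comp x htan).div_const π).const_add (1/2)
  have heq : myF t =ᶠ[nhds x] fun y => 1/2 + Real.arctan (Real.tan (π*y - π/2) + t) / π :=
    Filter.eventuallyEq_of_mem (Ioo_mem_nhds hx.1 hx.2) (fun y hy => myF_of_mem hy)
  have hD : (1/(1 + (Real.tan (π*x - π/2) + t)^2) * (1/Real.cos (π*x - π/2)^2 * π)) / π
      = myD t x := by
    rw [Real.tan_eq_sin_div_cos, Real.sin_sub_pi_div_two, Real.cos_sub_pi_div_two, myD]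
    have hp : Real.sin (π*x)^2 + Real.cos (π*x)^2 = 1 := Real.sin_sq_add_cos_sq _
    set s := Real.sin (π*x); set c := Real.cos (π*x)
    have hden := denom_pos t x
    have hd2 : s^2 + (t*s-c)^2 ≠ 0 := hden.ne'
    have h1p : (0:ℝ) < 1 + (-c/s + t)^2 := by positivity
    field_simp
    ring_nf
  rw [hD] at harc
  exact harc.congr_of_eventuallyEq heq

set_option maxHeartbeats 1000000 in
lemma myF_slope_zero (t : ℝ) :
    Tendsto (fun y => myF t y / y) (nhdsWithin 0 (Ioi (0:ℝ))) (nhds 1) := by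
  have hπ := Real.pi_pos
  -- sin (π y) tends to 0 within positives
  have hsin0 : Tendsto (fun y : ℝ => Real.sin (π*y)) (nhdsWithin 0 (Ioi 0)) (nhds 0) := by
    have : Continuous fun y : ℝ => Real.sin (π*y) := by continuity
    simpa using (this.tendsto 0).mono_left nhdsWithin_le_nhds
  have hev_mem : ∀ᶠ y in nhdsWithin (0:ℝ) (Ioi 0), y ∈ Ioo (0:ℝ) (1/2) := by
    have h1 : Iio (1/2 : ℝ) ∈ nhds (0:ℝ) := Iio_mem_nhds (by norm_num)
    filter_upwards [eventually_mem_nhdsWithin, eventually_nhdsWithin_of_eventually_nhds h1]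
      with y hy hy2
    exact ⟨hy, hy2⟩
  have hsin_pos : ∀ᶠ y in nhdsWithin (0:ℝ) (Ioi 0), 0 < Real.sin (π*y) := by
    filter_upwards [hev_mem] with y hy
    exact Real.sin_pos_of_pos_of_lt_pi (by nlinarith [hy.1]) (by nlinarith [hy.2])
  have hsinW : Tendsto (fun y : ℝ => Real.sin (π*y)) (nhdsWithin 0 (Ioi 0))
      (nhdsWithin 0 (Ioi 0)) :=
    tendsto_nhdsWithin_of_tendsto_nhds_of_eventually_within _ hsin0 hsin_pos
  have hinv : Tendsto (fun y : ℝ => (Real.sin (π*y))⁻¹) (nhdsWithin 0 (Ioi 0)) atTop :=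
    tendsto_inv_nhdsGT_zero.comp hsinW
  have hcos1 : Tendsto (fun y : ℝ => Real.cos (π*y)) (nhdsWithin 0 (Ioi 0)) (nhds 1) := by
    have : Continuous fun y : ℝ => Real.cos (π*y) := by continuity
    simpa using (this.tendsto 0).mono_left nhdsWithin_le_nhds
  have hcot : Tendsto (fun y : ℝ => Real.cos (π*y) * (Real.sin (π*y))⁻¹)
      (nhdsWithin 0 (Ioi 0)) atTop := hcos1.pos_mul_atTop one_pos hinv
  have hev_t : ∀ᶠ y in nhdsWithin (0:ℝ) (Ioi 0),
      t < Real.cos (π*y) * (Real.sin (π*y))⁻¹ := hcot.eventually_gt_atTop t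
  -- the denominator  t * sin - cos  is eventually negative
  have hden_neg : ∀ᶠ y in nhdsWithin (0:ℝ) (Ioi 0),
      t * Real.sin (π*y) - Real.cos (π*y) < 0 := by
    filter_upwards [hev_t, hsin_pos] with y h1 h2
    have h3 := mul_lt_mul_of_pos_right h1 h2
    rw [mul_assoc, inv_mul_cancel₀ h2.ne', mul_one] at h3
    linarith
  -- w y tends to 0 within negatives
  set w : ℝ → ℝ := fun y => Real.sin (π*y) / (t * Real.sin (π*y) - Real.cos (π*y)) with hw
  have hden_lim : Tendsto (fun y : ℝ => t * Real.sin (π*y) - Real.cos (π*y))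
      (nhdsWithin 0 (Ioi 0)) (nhds (-1)) := by
    have : Continuous fun y : ℝ => t * Real.sin (π*y) - Real.cos (π*y) := by continuity
    have h := (this.tendsto 0).mono_left (nhdsWithin_le_nhds (s := Ioi (0:ℝ)))
    simpa using h
  have hw0 : Tendsto w (nhdsWithin 0 (Ioi 0)) (nhds 0) := by
    have := hsin0.div hden_lim (by norm_num)
    rw [zero_div] at this
    exact this
  have hwneg : ∀ᶠ y in nhdsWithin (0:ℝ) (Ioi 0), w y < 0 := by
    filter_upwards [hsin_pos, hden_neg] with y h1 h2
    exact div_neg_of_pos_of_neg h1 h2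
  have hwW : Tendsto w (nhdsWithin 0 (Ioi 0)) (nhdsWithin 0 (Iio 0)) :=
    tendsto_nhdsWithin_of_tendsto_nhds_of_eventually_within _ hw0 hwneg
  have hwne : Tendsto w (nhdsWithin 0 (Ioi 0)) (nhdsWithin 0 ({(0:ℝ)}ᶜ)) :=
    hwW.mono_right (nhdsWithin_mono _ (fun y hy => ne_of_lt hy))
  -- arctan u / u → 1
  have harc : Tendsto (fun u : ℝ => Real.arctan u / u) (nhdsWithin 0 ({(0:ℝ)}ᶜ)) (nhds 1) := by
    have h := (Real.hasDerivAt_arctan 0)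
    rw [hasDerivAt_iff_tendsto_slope] at h
    simp only [slope_fun_def_field, Real.arctan_zero, sub_zero] at h
    norm_num at h
    exact h
  have harcw : Tendsto (fun y => Real.arctan (w y) / w y) (nhdsWithin 0 (Ioi 0)) (nhds 1) :=
    harc.comp hwne
  -- sin (π y) / y → π
  have hsl : Tendsto (fun y : ℝ => Real.sin (π*y) / y) (nhdsWithin 0 (Ioi 0)) (nhds π) := by
    have hd : HasDerivAt (fun y : ℝ => Real.sin (π*y)) (Real.cos (π*0) * π) 0 :=
      (Real.hasDerivAt_sin (π*0)).comp 0 (by simpa using (hasDerivAt_id (0:ℝ)).const_mul π)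
    rw [hasDerivAt_iff_tendsto_slope] at hd
    simp only [slope_fun_def_field, mul_zero, Real.sin_zero, sub_zero, Real.cos_zero,
      one_mul] at hd
    exact hd.mono_left (nhdsWithin_mono _ (fun y hy => ne_of_gt hy))
  -- assemble the limit of the product expression
  have hprod : Tendsto (fun y => (Real.arctan (w y) / w y) *
      (-(1/π) * (Real.sin (π*y) / y * (t * Real.sin (π*y) - Real.cos (π*y))⁻¹)))
      (nhdsWithin 0 (Ioi 0)) (nhds 1) := by
    have h2 : Tendsto (fun y : ℝ => (t * Real.sin (π*y) - Real.cos (π*y))⁻¹)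
        (nhdsWithin 0 (Ioi 0)) (nhds (-1)) := by
      have h := hden_lim.inv₀ (by norm_num)
      rw [show ((-1:ℝ))⁻¹ = -1 by norm_num] at h
      exact h
    have h3 := (harcw.mul ((tendsto_const_nhds (x := -(1/π))).mul (hsl.mul h2)))
    have : (1:ℝ) * (-(1/π) * (π * -1)) = 1 := by field_simp
    rw [this] at h3
    exact h3
  refine hprod.congr' ?_
  filter_upwards [hev_mem, hden_neg, hsin_pos, eventually_mem_nhdsWithin] with y hy hd hs hy0
  have hy0' : (0:ℝ) < y := hy0
  have hyI : y ∈ Ioo (0:ℝ) 1 := ⟨hy.1, by linarith [hy.2]⟩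
  have hsne : Real.sin (π*y) ≠ 0 := hs.ne'
  have htan : Real.tan (π*y - π/2) = -Real.cos (π*y) / Real.sin (π*y) := by
    rw [Real.tan_eq_sin_div_cos, Real.sin_sub_pi_div_two, Real.cos_sub_pi_div_two]
  have hτt_neg : Real.tan (π*y - π/2) + t < 0 := by
    rw [htan]
    rw [div_add' _ _ _ hsne]
    exact div_neg_of_neg_of_pos (by linarith) hs
  have hwinv : (Real.tan (π*y - π/2) + t)⁻¹ = w y := by
    rw [htan, hw]
    field_simp
    ring
  have harctan_eq : Real.arctan (Real.tan (π*y - π/2) + t)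
      = -(π/2) - Real.arctan (w y) := by
    rw [← hwinv, Real.arctan_inv_of_neg hτt_neg]
    ring
  have hmyF : myF t y = -Real.arctan (w y) / π := by
    rw [myF_of_mem hyI, harctan_eq]
    field_simp
    ring
  rw [hmyF]
  have hwne' : w y ≠ 0 := (div_neg_of_pos_of_neg hs hd).ne
  have hdne : t * Real.sin (π*y) - Real.cos (π*y) ≠ 0 := hd.ne
  have hwy : w y = Real.sin (π*y) / (t * Real.sin (π*y) - Real.cos (π*y)) := rfl
  have hyne : y ≠ 0 := hy0'.ne'
  have hπne : π ≠ 0 := hπ.ne'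
  have hdne2 : Real.sin (π*y) * t - Real.cos (π*y) ≠ 0 := by rw [mul_comm]; exact hdne
  rw [hwy]
  field_simp

lemma myF_symm (t x : ℝ) : myF t (1 - x) = 1 - myF (-t) x := by
  rcases le_or_gt x 0 with h | h
  · rw [myF_of_nonpos h, myF_of_one_le (by linarith)]
  rcases le_or_gt 1 x with h1 | h1
  · rw [myF_of_one_le h1, myF_of_nonpos (by linarith)]
  have hx : x ∈ Ioo (0:ℝ) 1 := ⟨h, h1⟩
  have hx' : 1 - x ∈ Ioo (0:ℝ) 1 := ⟨by linarith, by linarith⟩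
  rw [myF_of_mem hx', myF_of_mem hx]
  have e1 : π * (1 - x) - π/2 = -(π * x - π/2) := by ring
  rw [e1, Real.tan_neg]
  have e2 : -Real.tan (π * x - π/2) + t = -(Real.tan (π * x - π/2) + -t) := by ring
  rw [e2, Real.arctan_neg]
  ring

lemma myD_zero_val (t : ℝ) : myD t 0 = 1 := by
  simp [myD]

lemma myD_one_val (t : ℝ) : myD t 1 = 1 := by
  simp [myD, Real.sin_pi, Real.cos_pi]

lemma hasDerivWithinAt_myF_zero (t : ℝ) :
    HasDerivWithinAt (myF t) 1 (Icc (0:ℝ) 1) 0 := by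
  rw [hasDerivWithinAt_iff_tendsto_slope]
  have hmono : nhdsWithin (0:ℝ) (Icc (0:ℝ) 1 \ {0}) ≤ nhdsWithin 0 (Ioi 0) := by
    apply nhdsWithin_mono
    rintro y ⟨⟨h0, _⟩, hne⟩
    exact lt_of_le_of_ne h0 (Ne.symm hne)
  refine Tendsto.congr ?_ ((myF_slope_zero t).mono_left hmono)
  intro y
  simp [slope_fun_def_field, myF_of_nonpos (le_refl (0:ℝ))]

lemma hasDerivWithinAt_myF_one (t : ℝ) :
    HasDerivWithinAt (myF t) 1 (Icc (0:ℝ) 1) 1 := by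
  have h0 := hasDerivWithinAt_myF_zero (-t)
  have hA : HasDerivWithinAt (fun x : ℝ => 1 - x) (-1) (Icc (0:ℝ) 1) 1 := by
    simpa using ((hasDerivAt_id (1:ℝ)).const_sub 1).hasDerivWithinAt
  have hmaps : MapsTo (fun x : ℝ => 1 - x) (Icc (0:ℝ) 1) (Icc (0:ℝ) 1) := by
    rintro x ⟨ha, hb⟩
    exact ⟨by simp; linarith, by simp; linarith⟩
  have h0' : HasDerivWithinAt (myF (-t)) 1 (Icc (0:ℝ) 1) ((fun x : ℝ => 1 - x) 1) := by
    simpa using h0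
  have hcomp : HasDerivWithinAt (fun x : ℝ => myF (-t) (1 - x)) (1 * -1) (Icc (0:ℝ) 1) 1 :=
    h0'.comp (1:ℝ) hA hmaps
  have hfin : HasDerivWithinAt (fun x : ℝ => 1 - myF (-t) (1 - x)) (-(1 * -1)) (Icc (0:ℝ) 1) 1 :=
    hcomp.const_sub 1
  have heq : (fun x : ℝ => 1 - myF (-t) (1 - x)) = myF t := by
    funext x
    rw [← myF_symm t (1 - x)]
    norm_num
  rw [heq] at hfin
  simpa using hfin

lemma hasDerivWithinAt_myF {t x : ℝ} (hx : x ∈ Icc (0:ℝ) 1) :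
    HasDerivWithinAt (myF t) (myD t x) (Icc (0:ℝ) 1) x := by
  rcases eq_or_lt_of_le hx.1 with h0 | h0
  · rw [← h0, myD_zero_val]
    exact hasDerivWithinAt_myF_zero t
  rcases eq_or_lt_of_le hx.2 with h1 | h1
  · rw [h1, myD_one_val]
    exact hasDerivWithinAt_myF_one t
  · exact (hasDerivAt_myF t ⟨h0, h1⟩).hasDerivWithinAt

lemma derivWithin_myF {t x : ℝ} (hx : x ∈ Icc (0:ℝ) 1) :
    derivWithin (myF t) (Icc (0:ℝ) 1) x = myD t x :=
  (hasDerivWithinAt_myF hx).derivWithin (uniqueDiffOn_Icc one_pos x hx)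

lemma myD_continuous (t : ℝ) : Continuous (myD t) := by
  apply continuous_one.div
  · continuity
  · intro x
    exact (denom_pos t x).ne'

lemma contDiffOn_myF (t : ℝ) : ContDiffOn ℝ 1 (myF t) (Icc (0:ℝ) 1) := by
  have h : (1 : WithTop ℕ∞) = 0 + 1 := by norm_num
  rw [h, contDiffOn_succ_iff_derivWithin (uniqueDiffOn_Icc one_pos)]
  refine ⟨fun x hx => ((hasDerivWithinAt_myF hx).differentiableWithinAt), ?_, ?_⟩
  · intro h; exact absurd h (by norm_num)
  · rw [contDiffOn_zero]
    exact ((myD_continuous t).continuousOn).congr fun x hx => derivWithin_myF hx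

lemma supAbsDeriv_myF_le (t : ℝ) : supAbsDeriv (myF t) ≤ (|t|+2)^2 := by
  apply Real.sSup_le _ (by positivity)
  rintro y ⟨x, hx, rfl⟩
  show |derivWithin (myF t) (Icc (0:ℝ) 1) x| ≤ _
  rw [derivWithin_myF hx, abs_of_pos (myD_pos t x)]
  exact myD_le t x

lemma bddAbove_myF (t : ℝ) :
    BddAbove ((fun x => |derivWithin (myF t) (Icc (0:ℝ) 1) x|) '' Icc (0:ℝ) 1) := by
  refine ⟨(|t|+2)^2, ?_⟩
  rintro y ⟨x, hx, rfl⟩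
  show |derivWithin (myF t) (Icc (0:ℝ) 1) x| ≤ _
  rw [derivWithin_myF hx, abs_of_pos (myD_pos t x)]
  exact myD_le t x

lemma myD_witness (t : ℝ) (ht : 0 ≤ t) : myD t (Real.arctan t⁻¹ / π) = t^2 + 1 := by
  have hπ := Real.pi_ne_zero
  have harg : π * (Real.arctan t⁻¹ / π) = Real.arctan t⁻¹ := by field_simp
  rw [myD, harg, Real.sin_arctan, Real.cos_arctan]
  rcases eq_or_lt_of_le ht with h0 | h0
  · rw [← h0]; norm_num
  · have h1 : (0:ℝ) < 1 + (t⁻¹)^2 := by positivity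
    have h2 : Real.sqrt (1 + (t⁻¹)^2) > 0 := Real.sqrt_pos.mpr h1
    have h3 : (Real.sqrt (1 + (t⁻¹)^2))^2 = 1 + (t⁻¹)^2 := Real.sq_sqrt h1.le
    have htne : t ≠ 0 := h0.ne'
    have e : t * (t⁻¹ / Real.sqrt (1 + t⁻¹^2)) - 1 / Real.sqrt (1 + t⁻¹^2) = 0 := by
      field_simp
      simp
    rw [div_pow, e]
    rw [h3]
    norm_num
    field_simp

lemma arctan_div_pi_mem (t : ℝ) (ht : 0 ≤ t) : Real.arctan t⁻¹ / π ∈ Icc (0:ℝ) 1 := by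
  have hπ := Real.pi_pos
  have h1 : 0 ≤ Real.arctan t⁻¹ := by
    rw [← Real.arctan_zero]
    exact Real.arctan_strictMono.monotone (by positivity)
  have h2 := Real.arctan_lt_pi_div_two t⁻¹
  constructor
  · positivity
  · rw [div_le_one hπ]; linarith

lemma le_supAbsDeriv_myF (t : ℝ) (ht : 0 ≤ t) : t^2 + 1 ≤ supAbsDeriv (myF t) := by
  have hx := arctan_div_pi_mem t ht
  have : t^2 + 1 = |derivWithin (myF t) (Icc (0:ℝ) 1) (Real.arctan t⁻¹ / π)| := by
    rw [derivWithin_myF hx, abs_of_pos (myD_pos _ _), myD_witness t ht]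
  rw [this]
  exact le_csSup (bddAbove_myF t) ⟨_, hx, rfl⟩

lemma iterate_eq (t : ℝ) (n : ℕ) : (myF t)^[n] = myF (n * t) := funext (myF_iterate t n)

lemma Gamma_myF_lower (n : ℕ) : (n:ℝ)^2 + 1 ≤ _root_.Gamma (myF 1) (myF (-1)) n := by
  refine le_trans ?_ (le_max_left _ _)
  rw [iterate_eq 1 n, mul_one]
  exact le_supAbsDeriv_myF n (Nat.cast_nonneg n)

lemma Gamma_myF_upper (n : ℕ) : _root_.Gamma (myF 1) (myF (-1)) n ≤ ((n:ℝ) + 2)^2 := by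
  rw [_root_.Gamma, iterate_eq 1 n, iterate_eq (-1) n, mul_one]
  apply max_le
  · have := supAbsDeriv_myF_le (n:ℝ)
    rwa [abs_of_nonneg (Nat.cast_nonneg n)] at this
  · have := supAbsDeriv_myF_le ((n:ℝ) * -1)
    have he : |(n:ℝ) * -1| = (n:ℝ) := by
      rw [abs_of_nonpos (by simp [Nat.cast_nonneg])]; ring
    rwa [he] at this

lemma myabs_sin_le (x : ℝ) : |Real.sin x| ≤ |x| := by
  have key : ∀ y : ℝ, 0 ≤ y → |Real.sin y| ≤ y := by
    intro y h
    rw [abs_le]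
    refine ⟨?_, Real.sin_le h⟩
    rcases le_or_gt 1 y with h1 | h1
    · nlinarith [Real.neg_one_le_sin y]
    · have : 0 ≤ Real.sin y := Real.sin_nonneg_of_nonneg_of_le_pi h
        (by nlinarith [Real.pi_gt_three])
      linarith
  rcases le_or_gt 0 x with h | h
  · rw [abs_of_nonneg h]; exact key x h
  · rw [abs_of_neg h]
    have := key (-x) (by linarith)
    rwa [Real.sin_neg, abs_neg] at this

lemma sin_lip (a b : ℝ) : |Real.sin a - Real.sin b| ≤ |a - b| := by
  rw [Real.sin_sub_sin]
  rw [abs_mul, abs_mul]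
  have h1 := myabs_sin_le ((a-b)/2)
  have h2 := Real.abs_cos_le_one ((a+b)/2)
  have h3 : |(2:ℝ)| = 2 := by norm_num
  rw [h3]
  calc 2 * |Real.sin ((a-b)/2)| * |Real.cos ((a+b)/2)|
      ≤ 2 * |(a-b)/2| * 1 := by
        apply mul_le_mul _ h2 (abs_nonneg _) (by positivity)
        apply mul_le_mul_of_nonneg_left h1 (by norm_num)
    _ = |a - b| := by
        rw [abs_div, mul_one, show |(2:ℝ)| = 2 by norm_num]
        ring

lemma myd_ge (z : ℝ) :
    1/3 ≤ Real.sin (π*z)^2 + (1 * Real.sin (π*z) - Real.cos (π*z))^2 := by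
  have hp := Real.sin_sq_add_cos_sq (π*z)
  nlinarith [sq_nonneg (3 * Real.sin (π*z) - 2 * Real.cos (π*z))]

lemma myd_lip (x y : ℝ) :
    |(Real.sin (π*x)^2 + (1 * Real.sin (π*x) - Real.cos (π*x))^2)
      - (Real.sin (π*y)^2 + (1 * Real.sin (π*y) - Real.cos (π*y))^2)| ≤ 13 * |x - y| := by
  have hπ4 := Real.pi_lt_d2
  have hπ0 := Real.pi_pos
  have e : ∀ z : ℝ, Real.sin (π*z)^2 + (1 * Real.sin (π*z) - Real.cos (π*z))^2
      = 1 + Real.sin (π*z)^2 - Real.sin (2*(π*z)) := by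
    intro z
    have hp := Real.sin_sq_add_cos_sq (π*z)
    rw [Real.sin_two_mul]
    nlinarith []
  rw [e x, e y]
  have h1 : |Real.sin (π*x) - Real.sin (π*y)| ≤ π * |x - y| := by
    have := sin_lip (π*x) (π*y)
    calc |Real.sin (π*x) - Real.sin (π*y)| ≤ |π*x - π*y| := this
      _ = π * |x-y| := by rw [← mul_sub, abs_mul, abs_of_pos hπ0]
  have h2 : |Real.sin (2*(π*x)) - Real.sin (2*(π*y))| ≤ 2*π*|x - y| := by
    have := sin_lip (2*(π*x)) (2*(π*y))
    calc |Real.sin (2*(π*x)) - Real.sin (2*(π*y))| ≤ |2*(π*x) - 2*(π*y)| := this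
      _ = 2*π * |x-y| := by
          rw [show 2*(π*x) - 2*(π*y) = (2*π)*(x-y) by ring, abs_mul,
            abs_of_pos (by positivity)]
  have h3 : |Real.sin (π*x)^2 - Real.sin (π*y)^2| ≤ 2*π*|x - y| := by
    have e2 : Real.sin (π*x)^2 - Real.sin (π*y)^2
        = (Real.sin (π*x) - Real.sin (π*y)) * (Real.sin (π*x) + Real.sin (π*y)) := by ring
    rw [e2, abs_mul]
    have h4 : |Real.sin (π*x) + Real.sin (π*y)| ≤ 2 := by
      have := Real.abs_sin_le_one (π*x)
      have := Real.abs_sin_le_one (π*y)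
      calc |Real.sin (π*x) + Real.sin (π*y)| ≤ |Real.sin (π*x)| + |Real.sin (π*y)| :=
            abs_add_le _ _
        _ ≤ 2 := by linarith
    calc |Real.sin (π*x) - Real.sin (π*y)| * |Real.sin (π*x) + Real.sin (π*y)|
        ≤ (π * |x-y|) * 2 := by
          apply mul_le_mul h1 h4 (abs_nonneg _) (by positivity)
      _ = 2*π*|x-y| := by ring
  calc |1 + Real.sin (π*x)^2 - Real.sin (2*(π*x)) - (1 + Real.sin (π*y)^2 - Real.sin (2*(π*y)))|
      = |(Real.sin (π*x)^2 - Real.sin (π*y)^2) - (Real.sin (2*(π*x)) - Real.sin (2*(π*y)))| := by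
        ring_nf
    _ ≤ |Real.sin (π*x)^2 - Real.sin (π*y)^2| + |Real.sin (2*(π*x)) - Real.sin (2*(π*y))| :=
        abs_sub _ _
    _ ≤ 2*π*|x-y| + 2*π*|x-y| := by linarith
    _ ≤ 13 * |x-y| := by nlinarith [abs_nonneg (x-y)]

lemma myD_one_lip (x y : ℝ) : |myD 1 x - myD 1 y| ≤ 117 * |x - y| := by
  set dx := Real.sin (π*x)^2 + (1 * Real.sin (π*x) - Real.cos (π*x))^2 with hdx
  set dy := Real.sin (π*y)^2 + (1 * Real.sin (π*y) - Real.cos (π*y))^2 with hdy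
  have hx3 := myd_ge x
  have hy3 := myd_ge y
  have hxp : 0 < dx := lt_of_lt_of_le (by norm_num) hx3
  have hyp : 0 < dy := lt_of_lt_of_le (by norm_num) hy3
  have e : myD 1 x - myD 1 y = (dy - dx) / (dx * dy) := by
    rw [myD, myD, ← hdx, ← hdy]
    field_simp
  rw [e, abs_div, abs_of_pos (by positivity : (0:ℝ) < dx * dy)]
  have h1 : |dy - dx| ≤ 13 * |x - y| := by
    have h := myd_lip y x
    rw [abs_sub_comm y x] at h
    exact h
  have h2 : (1:ℝ)/9 ≤ dx * dy := by nlinarith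
  calc |dy - dx| / (dx * dy) ≤ (13 * |x - y|) / (1/9) :=
        div_le_div₀ (by positivity) h1 (by norm_num) h2
    _ = 117 * |x - y| := by ring

lemma gamma_ge_one (n : ℕ) : (1:ℝ) ≤ _root_.Gamma (myF 1) (myF (-1)) n :=
  le_trans (by nlinarith [sq_nonneg ((n:ℝ))]) (Gamma_myF_lower n)

lemma gammaEqOne_myF : GammaEqOne (myF 1) (myF (-1)) := by
  rw [GammaEqOne]
  have hlog : Tendsto (fun x : ℝ => Real.log ((x+2)^2) * (1/x)) atTop (nhds 0) := by
    have l1 : Tendsto (fun x : ℝ => Real.log x / x) atTop (nhds 0) :=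
      Real.isLittleO_log_id_atTop.tendsto_div_nhds_zero
    have l2 : Tendsto (fun x : ℝ => Real.log (x+2) / (x+2)) atTop (nhds 0) :=
      l1.comp (tendsto_atTop_add_const_right _ 2 tendsto_id)
    have l3 : Tendsto (fun x : ℝ => (x+2)/x) atTop (nhds 1) := by
      have h : Tendsto (fun x : ℝ => 1 + 2/x) atTop (nhds (1+0)) :=
        tendsto_const_nhds.add (tendsto_const_nhds.div_atTop tendsto_id)
      rw [add_zero] at h
      refine h.congr' ?_
      filter_upwards [eventually_gt_atTop (0:ℝ)] with x hx
      field_simp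
    have l4 := l2.mul l3
    rw [zero_mul] at l4
    have l5 : Tendsto (fun x : ℝ => 2 * (Real.log (x+2)/(x+2) * ((x+2)/x))) atTop (nhds 0) := by
      have := l4.const_mul (2:ℝ)
      rwa [mul_zero] at this
    refine l5.congr' ?_
    filter_upwards [eventually_gt_atTop (0:ℝ)] with x hx
    rw [Real.log_pow]
    push_cast
    field_simp
  have hupper : Tendsto (fun n : ℕ => (((n:ℝ)+2)^2) ^ (1/(n:ℝ))) atTop (nhds 1) := by
    have hcomp := (Real.continuous_exp.tendsto 0).comp (hlog.comp tendsto_natCast_atTop_atTop)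
    rw [Real.exp_zero] at hcomp
    refine Tendsto.congr ?_ hcomp
    intro n
    rw [Function.comp_apply, Function.comp_apply, Real.rpow_def_of_pos (by positivity)]
  apply tendsto_of_tendsto_of_tendsto_of_le_of_le' tendsto_const_nhds hupper
  · filter_upwards with n
    calc (1:ℝ) = 1 ^ (1/(n:ℝ)) := (Real.one_rpow _).symm
      _ ≤ _ := Real.rpow_le_rpow zero_le_one (gamma_ge_one n) (by positivity)
  · filter_upwards with n
    exact Real.rpow_le_rpow (le_trans zero_le_one (gamma_ge_one n)) (Gamma_myF_upper n)
      (by positivity)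

lemma isDiff01_myF : IsDiff01 (myF 1) (myF (-1)) := by
  constructor
  · intro x hx
    rcases eq_or_lt_of_le hx.1 with h0 | h0
    · rw [← h0, myF_of_nonpos le_rfl]; exact ⟨le_rfl, zero_le_one⟩
    rcases eq_or_lt_of_le hx.2 with h1 | h1
    · rw [h1, myF_of_one_le le_rfl]; exact ⟨zero_le_one, le_rfl⟩
    · exact mem_Icc_of_Ioo (myF_mem_Ioo ⟨h0, h1⟩)
  · intro x hx
    rcases eq_or_lt_of_le hx.1 with h0 | h0
    · rw [← h0, myF_of_nonpos le_rfl]; exact ⟨le_rfl, zero_le_one⟩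
    rcases eq_or_lt_of_le hx.2 with h1 | h1
    · rw [h1, myF_of_one_le le_rfl]; exact ⟨zero_le_one, le_rfl⟩
    · exact mem_Icc_of_Ioo (myF_mem_Ioo ⟨h0, h1⟩)
  · intro x _
    rw [myF_comp]
    norm_num
    exact myF_id x
  · intro x _
    rw [myF_comp]
    norm_num
    exact myF_id x
  · exact myF_of_nonpos le_rfl
  · exact myF_of_one_le le_rfl
  · exact contDiffOn_myF 1
  · exact contDiffOn_myF (-1)
  · intro x hx
    rw [derivWithin_myF hx]
    exact myD_pos 1 x

lemma philog_mono : StrictMonoOn (fun u : ℝ => u - u * Real.log u) (Icc (0:ℝ) 1) := by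
  apply strictMonoOn_of_deriv_pos (convex_Icc 0 1)
  · exact (continuous_id.sub Real.continuous_mul_log).continuousOn
  · intro u hu
    rw [interior_Icc] at hu
    have hd : HasDerivAt (fun u : ℝ => u - u * Real.log u) (1 - (Real.log u + 1)) u :=
      (hasDerivAt_id u).sub (Real.hasDerivAt_mul_log hu.1.ne')
    rw [hd.deriv]
    have : Real.log u < 0 := Real.log_neg hu.1 hu.2
    linarith

set_option maxHeartbeats 2000000 in
/-- **Theorem 6 (sharpness of Theorem 4).** Under the stated regularity assumptions on `ω`
there exists `f ∈ Diff₀^ω[0,1]` with `γ(f) = 1` and `c(f) > 0` such that for every `ε > 0`,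
`log Γ_n(f) ≥ (1-ε) · log (n / ω⁻¹(c(f)/n))` for all large `n`. -/
theorem sharpness_modulus (ω : ℝ → ℝ) (hω : IsModCont ω)
    (hinc : ∀ α : ℝ, 0 < α → α < 1 → ∃ a : ℝ, 0 < a ∧ a < 1 ∧
      MonotoneOn (fun x => ω x / x ^ α) (Set.Ioc 0 a))
    (hdec : AntitoneOn (fun x => ω x / x) (Set.Ioc (0:ℝ) 1))
    (hlim : Filter.Tendsto (fun x => ω x / (x * Real.log (Real.exp 1 / x)))
      (nhdsWithin 0 (Set.Ioi 0)) (nhds 0))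
    (hsm : StrictMonoOn ω (Set.Icc (0:ℝ) 1))
    (winv : ℝ → ℝ) (hwinv : ∀ x ∈ Set.Icc (0:ℝ) 1, winv (ω x) = x) :
    ∃ f g : ℝ → ℝ, IsDiff01 f g ∧ InDiffOmega ω f ∧ GammaEqOne f g ∧
      ∃ c > 0, ∀ ε > 0, ∃ N : ℕ, ∀ n : ℕ, N ≤ n →
        (1 - ε) * Real.log ((n:ℝ) / winv (c / (n:ℝ))) ≤ Real.log (Gamma f g n) := by
  have hω1 : 0 < ω 1 := by
    have := hsm ⟨le_rfl, zero_le_one⟩ ⟨zero_le_one, le_rfl⟩ zero_lt_one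
    rwa [hω.map_zero] at this
  refine ⟨myF 1, myF (-1), isDiff01_myF, ?_, gammaEqOne_myF, ?_⟩
  · -- InDiffOmega
    refine ⟨117 / ω 1 + 1, by positivity, ?_⟩
    intro x hx y hy
    rw [derivWithin_myF hx, derivWithin_myF hy]
    rcases eq_or_ne x y with rfl | hne
    · simp [hω.map_zero]
    · have hd : 0 < |x - y| := abs_pos.mpr (sub_ne_zero.mpr hne)
      have hle1 : |x - y| ≤ 1 := by
        rw [abs_le]
        constructor
        · linarith [hx.1, hy.2]
        · linarith [hx.2, hy.1]
      have h2 : ω 1 / 1 ≤ ω |x-y| / |x-y| := hdec ⟨hd, hle1⟩ ⟨zero_lt_one, le_rfl⟩ hle1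
      rw [div_one] at h2
      have h3 : ω 1 * |x-y| ≤ ω |x-y| := by
        calc ω 1 * |x-y| ≤ (ω |x-y| / |x-y|) * |x-y| := mul_le_mul_of_nonneg_right h2 hd.le
          _ = ω |x-y| := div_mul_cancel₀ _ hd.ne'
      have hωnn : 0 ≤ ω |x-y| := hω.nonneg _ ⟨abs_nonneg _, hle1⟩
      calc |myD 1 x - myD 1 y| ≤ 117 * |x-y| := myD_one_lip x y
        _ = (117 / ω 1) * (ω 1 * |x-y|) := by field_simp
        _ ≤ (117 / ω 1) * ω |x-y| := mul_le_mul_of_nonneg_left h3 (by positivity)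
        _ ≤ (117 / ω 1 + 1) * ω |x-y| := by nlinarith
  · -- growth estimate
    refine ⟨ω 1, hω1, ?_⟩
    intro ε hε
    set ε' : ℝ := min ε (1/2) with hε'def
    have hε'0 : 0 < ε' := lt_min hε (by norm_num)
    have hε'h : ε' ≤ 1/2 := min_le_right _ _
    have hε'ε : ε' ≤ ε := min_le_left _ _
    -- δ from hlim
    have hev : ∀ᶠ x in nhdsWithin (0:ℝ) (Ioi 0),
        ω x / (x * Real.log (Real.exp 1 / x)) < 1 :=
      hlim.eventually_lt_const one_pos
    obtain ⟨δ₀, hδ₀pos, hδ₀⟩ := (nhdsGT_basis (0:ℝ)).eventually_iff.mp hev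
    set δ : ℝ := min δ₀ 1 with hδdef
    have hδpos : 0 < δ := lt_min hδ₀pos one_pos
    have hδ1 : δ ≤ 1 := min_le_right _ _
    have hδbound : ∀ x : ℝ, 0 < x → x < δ → ω x ≤ x * (1 - Real.log x) := by
      intro x hx0 hxδ
      have hx1 : x < 1 := lt_of_lt_of_le hxδ hδ1
      have hlx : Real.log x < 0 := Real.log_neg hx0 hx1
      have he : Real.log (Real.exp 1 / x) = 1 - Real.log x := by
        rw [Real.log_div (Real.exp_ne_zero 1) hx0.ne', Real.log_exp]
      have hratio := hδ₀ ⟨hx0, lt_of_lt_of_le hxδ (min_le_left _ _)⟩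
      rw [he] at hratio
      have hden : 0 < x * (1 - Real.log x) := by nlinarith
      have := (div_lt_one hden).mp hratio
      linarith
    -- eventual conditions
    have hC3 : ∀ᶠ n : ℕ in atTop, 1 + 2 * Real.log n < ω 1 * n := by
      have l1 : Tendsto (fun x : ℝ => Real.log x / x) atTop (nhds 0) :=
        Real.isLittleO_log_id_atTop.tendsto_div_nhds_zero
      have l2 : Tendsto (fun x : ℝ => 1/x + 2 * (Real.log x / x)) atTop (nhds 0) := by
        have h0 : Tendsto (fun x : ℝ => 1/x) atTop (nhds 0) :=
          tendsto_const_nhds.div_atTop tendsto_id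
        have := h0.add ((l1.const_mul 2).congr (fun x => rfl))
        simpa using this
      have l3 := (l2.comp tendsto_natCast_atTop_atTop).eventually_lt_const hω1
      filter_upwards [l3, eventually_gt_atTop 0] with n hn hn0
      have hn0' : (0:ℝ) < n := by exact_mod_cast hn0
      have : (1 + 2 * Real.log n) / n < ω 1 := by
        have he : (1:ℝ)/(n:ℝ) + 2 * (Real.log n / n) = (1 + 2 * Real.log n) / n := by
          field_simp
        rw [← he]
        exact hn
      calc 1 + 2 * Real.log n = ((1 + 2 * Real.log n) / n) * n := by field_simp
        _ < ω 1 * n := by exact mul_lt_mul_of_pos_right this hn0'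
    have hC7 : ∀ᶠ n : ℕ in atTop, 1/(n:ℝ)^2 < δ := by
      have h : Tendsto (fun n : ℕ => 1/((n:ℝ))^2) atTop (nhds 0) := by
        apply Tendsto.comp (g := fun x : ℝ => 1/x^2) ?_ tendsto_natCast_atTop_atTop
        exact tendsto_const_nhds.div_atTop (tendsto_pow_atTop (by norm_num))
      exact h.eventually_lt_const hδpos
    have hC4 : ∀ᶠ n : ℕ in atTop, ω 1 / ((n:ℝ) * (1 + 2 * Real.log n)) ≤ δ := by
      have hden : Tendsto (fun x : ℝ => x * (1 + 2 * Real.log x)) atTop atTop := by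
        apply Filter.Tendsto.atTop_mul_atTop₀ tendsto_id
        apply tendsto_atTop_add_const_left
        exact (Real.tendsto_log_atTop.const_mul_atTop two_pos)
      have h := (tendsto_const_nhds (x := ω 1)).div_atTop hden
      have h2 := (h.comp tendsto_natCast_atTop_atTop).eventually_lt_const hδpos
      filter_upwards [h2] with n hn
      exact le_of_lt hn
    have hC5 : ∀ᶠ n : ℕ in atTop,
        (1 - ε') * (Real.log (1 + 2 * Real.log n) - Real.log (ω 1)) ≤
          2 * ε' * Real.log n := by
      have l1 : Tendsto (fun x : ℝ => Real.log x / x) atTop (nhds 0) :=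
        Real.isLittleO_log_id_atTop.tendsto_div_nhds_zero
      have g1 : Tendsto (fun y : ℝ => 1 + 2*y) atTop atTop := by
        apply tendsto_atTop_add_const_left
        exact tendsto_id.const_mul_atTop two_pos
      have g2 : Tendsto (fun y : ℝ => Real.log (1 + 2*y) / (1 + 2*y)) atTop (nhds 0) :=
        l1.comp g1
      have g3 : Tendsto (fun y : ℝ => (1 + 2*y)/y) atTop (nhds 2) := by
        have h : Tendsto (fun y : ℝ => 1/y + 2) atTop (nhds (0 + 2)) :=
          (tendsto_const_nhds.div_atTop tendsto_id).add tendsto_const_nhds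
        rw [zero_add] at h
        refine h.congr' ?_
        filter_upwards [eventually_gt_atTop (0:ℝ)] with y hy
        field_simp
      have g4 : Tendsto (fun y : ℝ => Real.log (1 + 2*y) / y) atTop (nhds 0) := by
        have := g2.mul g3
        rw [zero_mul] at this
        refine this.congr' ?_
        filter_upwards [eventually_gt_atTop (0:ℝ)] with y hy
        have h12 : (0:ℝ) < 1 + 2*y := by linarith
        field_simp
      have g5 : Tendsto (fun x : ℝ =>
          (1 - ε') * (Real.log (1 + 2 * Real.log x) - Real.log (ω 1)) / Real.log x)
          atTop (nhds 0) := by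
        have hA := g4.comp Real.tendsto_log_atTop
        have hB : Tendsto (fun x : ℝ => Real.log (ω 1) / Real.log x) atTop (nhds 0) :=
          tendsto_const_nhds.div_atTop Real.tendsto_log_atTop
        have hAB := hA.sub hB
        rw [sub_zero] at hAB
        have := hAB.const_mul (1 - ε')
        rw [mul_zero] at this
        refine this.congr' ?_
        filter_upwards [Real.tendsto_log_atTop.eventually_gt_atTop 0] with x hx
        simp only [Function.comp_apply]
        field_simp
      have g6 := (g5.comp tendsto_natCast_atTop_atTop).eventually_lt_const
        (by positivity : (0:ℝ) < 2 * ε')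
      filter_upwards [g6, (Real.tendsto_log_atTop.comp
        tendsto_natCast_atTop_atTop).eventually_gt_atTop 0] with n hn hlogn
      simp only [Function.comp_apply] at hn hlogn
      have := (div_lt_iff₀ hlogn).mp hn
      linarith
    obtain ⟨N, hN⟩ := eventually_atTop.mp
      ((hC3.and (hC7.and (hC4.and hC5))).and (eventually_ge_atTop 2))
    refine ⟨N, ?_⟩
    intro n hn
    obtain ⟨⟨c3, c7, c4, c5⟩, hn2⟩ := hN n hn
    -- basic facts about n
    have hn1 : (1:ℝ) ≤ (n:ℝ) := by
      have : (2:ℝ) ≤ (n:ℝ) := by exact_mod_cast hn2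
      linarith
    have hn0 : (0:ℝ) < n := by linarith
    have hlogn0 : 0 ≤ Real.log n := Real.log_nonneg hn1
    have h1p : (0:ℝ) < 1 + 2 * Real.log n := by linarith
    have hlog2 : Real.log (1/(n:ℝ)^2) = -(2 * Real.log n) := by
      rw [one_div, Real.log_inv, Real.log_pow]; push_cast; ring
    -- the point x with ω x = ω 1 / n
    have hIcc : ω 1 / (n:ℝ) ∈ Icc (ω 0) (ω 1) := by
      constructor
      · rw [hω.map_zero]; positivity
      · rw [div_le_iff₀ hn0]; nlinarith
    obtain ⟨x, hx01, hωx⟩ := intermediate_value_Icc zero_le_one hω.continuousOn hIcc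
    have hwx : winv (ω 1 / n) = x := by rw [← hωx]; exact hwinv x hx01
    have hx0 : 0 < x := by
      rcases eq_or_lt_of_le hx01.1 with h | h
      · exfalso
        rw [← h, hω.map_zero] at hωx
        have h9 : 0 < ω 1 / n := by positivity
        rw [← hωx] at h9
        exact lt_irrefl 0 h9
      · exact h
    -- Step A : 1/n² ≤ x
    have hstepA : 1/(n:ℝ)^2 ≤ x := by
      by_contra hcon
      push_neg at hcon
      have hxδ : x < δ := lt_trans hcon c7
      have hωle := hδbound x hx0 hxδ
      have hφ : x - x * Real.log x ≤ 1/(n:ℝ)^2 - (1/(n:ℝ)^2) * Real.log (1/(n:ℝ)^2) := by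
        have hm2 : 1/(n:ℝ)^2 ∈ Icc (0:ℝ) 1 :=
          ⟨by positivity, by rw [div_le_one (by positivity)]; nlinarith⟩
        exact (philog_mono hx01 hm2 hcon).le
      rw [hlog2] at hφ
      have hchain : ω 1 / n ≤ (1/(n:ℝ)^2) * (1 + 2*Real.log n) := by
        calc ω 1 / n = ω x := hωx.symm
          _ ≤ x * (1 - Real.log x) := hωle
          _ = x - x * Real.log x := by ring
          _ ≤ 1/(n:ℝ)^2 - (1/(n:ℝ)^2) * (-(2*Real.log n)) := hφ
          _ = (1/(n:ℝ)^2) * (1 + 2*Real.log n) := by ring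
      have h4 : ω 1 * n ≤ 1 + 2*Real.log n := by
        have h5 := mul_le_mul_of_nonneg_right hchain
          (le_of_lt (by positivity : (0:ℝ) < (n:ℝ)^2))
        have e1 : ω 1 / n * (n:ℝ)^2 = ω 1 * n := by field_simp
        have e2 : (1/(n:ℝ)^2) * (1+2*Real.log n) * (n:ℝ)^2 = 1 + 2*Real.log n := by
          field_simp
        rw [e1, e2] at h5
        exact h5
      linarith
    -- Step B
    have hstepB : ω 1 / ((n:ℝ) * (1 + 2*Real.log n)) ≤ x := by
      rcases le_or_gt δ x with h | h
      · exact le_trans c4 h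
      · have hωle := hδbound x hx0 h
        have hlogx : -(2*Real.log n) ≤ Real.log x := by
          have h10 := Real.log_le_log (by positivity : (0:ℝ) < 1/(n:ℝ)^2) hstepA
          rwa [hlog2] at h10
        have h6 : ω 1 / n ≤ x * (1 + 2*Real.log n) := by
          calc ω 1 / n = ω x := hωx.symm
            _ ≤ x * (1 - Real.log x) := hωle
            _ ≤ x * (1 + 2*Real.log n) := by nlinarith [hx0]
        rw [div_le_iff₀ (by positivity)]
        have h11 := mul_le_mul_of_nonneg_right h6 (le_of_lt hn0)
        calc ω 1 = (ω 1 / n) * n := by field_simp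
          _ ≤ (x * (1+2*Real.log n)) * n := h11
          _ = x * ((n:ℝ) * (1+2*Real.log n)) := by ring
    -- Step C
    have hxle1 : x ≤ 1 := hx01.2
    have hnx_pos : 0 < (n:ℝ)/x := by positivity
    have hlognx : Real.log ((n:ℝ)/x)
        ≤ 2*Real.log n + Real.log (1+2*Real.log n) - Real.log (ω 1) := by
      have h8 := (div_le_iff₀ (by positivity : (0:ℝ) < (n:ℝ)*(1+2*Real.log n))).mp hstepB
      have h7 : (n:ℝ)/x ≤ (n:ℝ)^2 * (1+2*Real.log n) / ω 1 := by
        rw [div_le_div_iff₀ hx0 hω1]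
        nlinarith [h8, hn0]
      calc Real.log ((n:ℝ)/x) ≤ Real.log ((n:ℝ)^2 * (1+2*Real.log n) / ω 1) :=
            Real.log_le_log hnx_pos h7
        _ = 2*Real.log n + Real.log (1+2*Real.log n) - Real.log (ω 1) := by
            rw [Real.log_div (by positivity) hω1.ne',
              Real.log_mul (by positivity) h1p.ne', Real.log_pow]
            push_cast; ring
    -- final chain
    rw [hwx]
    have hnx1 : (1:ℝ) ≤ (n:ℝ)/x := by rw [le_div_iff₀ hx0]; nlinarith
    have hlognx0 : 0 ≤ Real.log ((n:ℝ)/x) := Real.log_nonneg hnx1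
    have step1 : (1-ε) * Real.log ((n:ℝ)/x) ≤ (1-ε') * Real.log ((n:ℝ)/x) :=
      mul_le_mul_of_nonneg_right (by linarith) hlognx0
    have step2 : (1-ε') * Real.log ((n:ℝ)/x)
        ≤ (1-ε') * (2*Real.log n + Real.log (1+2*Real.log n) - Real.log (ω 1)) :=
      mul_le_mul_of_nonneg_left hlognx (by linarith)
    have step3 : (1-ε') * (2*Real.log n + Real.log (1+2*Real.log n) - Real.log (ω 1))
        ≤ 2 * Real.log n := by nlinarith [c5, mul_nonneg hε'0.le hlogn0]
    have step4 : 2*Real.log n ≤ Real.log ((n:ℝ)^2 + 1) := by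
      have h12 : Real.log ((n:ℝ)^2) ≤ Real.log ((n:ℝ)^2+1) :=
        Real.log_le_log (by positivity) (by linarith)
      have h13 : Real.log ((n:ℝ)^2) = 2 * Real.log n := by
        rw [show ((n:ℝ)^2) = (n:ℝ)*(n:ℝ) by ring, Real.log_mul hn0.ne' hn0.ne']
        ring
      linarith
    have step5 : Real.log ((n:ℝ)^2+1) ≤ Real.log (_root_.Gamma (myF 1) (myF (-1)) n) :=
      Real.log_le_log (by positivity) (Gamma_myF_lower n)
    linarith
end

section
/- For every f ∈ Diff₀[0,1], one has γ(f) = 1 if and only if f'(ξ) = 1 for every fixed point ξ of f (i.e., for every ξ ∈ [0,1] with f(ξ) = ξ). -/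
open Set Filter

namespace GammaProof

lemma udI : UniqueDiffOn ℝ (Set.Icc (0:ℝ) 1) := uniqueDiffOn_Icc one_pos

lemma supAbsDeriv_le {F : ℝ → ℝ} {B : ℝ}
    (h : ∀ x ∈ Set.Icc (0:ℝ) 1, |derivWithin F (Set.Icc (0:ℝ) 1) x| ≤ B) :
    supAbsDeriv F ≤ B := by
  apply Real.sSup_le
  · rintro y ⟨x, hx, rfl⟩; exact h x hx
  · exact le_trans (abs_nonneg _) (h 0 (by norm_num))

lemma abs_derivWithin_le_supAbsDeriv {F : ℝ → ℝ} (hF : ContDiffOn ℝ 1 F (Set.Icc (0:ℝ) 1))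
    {x : ℝ} (hx : x ∈ Set.Icc (0:ℝ) 1) :
    |derivWithin F (Set.Icc (0:ℝ) 1) x| ≤ supAbsDeriv F := by
  apply le_csSup
  · exact IsCompact.bddAbove_image isCompact_Icc
      ((hF.continuousOn_derivWithin udI le_rfl).abs)
  · exact ⟨x, hx, rfl⟩

lemma iter_contDiffOn {f : ℝ → ℝ} (hF : ContDiffOn ℝ 1 f (Set.Icc (0:ℝ) 1))
    (hm : Set.MapsTo f (Set.Icc (0:ℝ) 1) (Set.Icc (0:ℝ) 1)) (n : ℕ) :
    ContDiffOn ℝ 1 (f^[n]) (Set.Icc (0:ℝ) 1) := by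
  induction n with
  | zero => simpa using contDiffOn_id
  | succ n ih => rw [Function.iterate_succ']; exact hF.comp ih (hm.iterate n)

lemma iter_hasDerivWithinAt {f : ℝ → ℝ} (hF : ContDiffOn ℝ 1 f (Set.Icc (0:ℝ) 1))
    (hm : Set.MapsTo f (Set.Icc (0:ℝ) 1) (Set.Icc (0:ℝ) 1)) (n : ℕ)
    {x : ℝ} (hx : x ∈ Set.Icc (0:ℝ) 1) :
    HasDerivWithinAt (f^[n])
      (∏ k ∈ Finset.range n, derivWithin f (Set.Icc (0:ℝ) 1) (f^[k] x))
      (Set.Icc (0:ℝ) 1) x := by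
  induction n with
  | zero => simpa using hasDerivWithinAt_id x _
  | succ n ih =>
      rw [Function.iterate_succ', Finset.prod_range_succ]
      have hfd : HasDerivWithinAt f (derivWithin f (Set.Icc (0:ℝ) 1) (f^[n] x))
          (Set.Icc (0:ℝ) 1) (f^[n] x) :=
        ((hF.differentiableOn one_ne_zero) _ (hm.iterate n hx)).hasDerivWithinAt
      simpa [mul_comm] using hfd.comp x ih (hm.iterate n)

lemma one_le_supAbsDeriv {F : ℝ → ℝ} (hF : ContDiffOn ℝ 1 F (Set.Icc (0:ℝ) 1))
    (h0 : F 0 = 0) (h1 : F 1 = 1) : 1 ≤ supAbsDeriv F := by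
  obtain ⟨c, hc, hceq⟩ := exists_hasDerivAt_eq_slope F (deriv F) one_pos hF.continuousOn
    (fun x hx => by
      have hI : Set.Icc (0:ℝ) 1 ∈ nhds x := Icc_mem_nhds hx.1 hx.2
      exact ((((hF.differentiableOn one_ne_zero) x (Ioo_subset_Icc_self hx)).hasDerivWithinAt).hasDerivAt hI).deriv ▸ (((hF.differentiableOn one_ne_zero) x (Ioo_subset_Icc_self hx)).hasDerivWithinAt).hasDerivAt hI)
  have hcI : c ∈ Set.Icc (0:ℝ) 1 := Ioo_subset_Icc_self hc
  have : derivWithin F (Set.Icc (0:ℝ) 1) c = deriv F c :=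
    derivWithin_of_mem_nhds (Icc_mem_nhds hc.1 hc.2)
  have h2 : |derivWithin F (Set.Icc (0:ℝ) 1) c| = 1 := by
    rw [this, hceq, h0, h1]; norm_num
  calc (1:ℝ) = |derivWithin F (Set.Icc (0:ℝ) 1) c| := h2.symm
    _ ≤ supAbsDeriv F := le_csSup
        (IsCompact.bddAbove_image isCompact_Icc
          ((hF.continuousOn_derivWithin udI le_rfl).abs)) ⟨c, hcI, rfl⟩

lemma inv_deriv_mul {f g : ℝ → ℝ} (hf : IsDiff01 f g) {x : ℝ} (hx : x ∈ Set.Icc (0:ℝ) 1) :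
    derivWithin f (Set.Icc (0:ℝ) 1) (g x) * derivWithin g (Set.Icc (0:ℝ) 1) x = 1 := by
  have hgd : HasDerivWithinAt g (derivWithin g (Set.Icc (0:ℝ) 1) x) (Set.Icc (0:ℝ) 1) x :=
    ((hf.inv_contDiffOn.differentiableOn one_ne_zero) x hx).hasDerivWithinAt
  have hfd : HasDerivWithinAt f (derivWithin f (Set.Icc (0:ℝ) 1) (g x))
      (Set.Icc (0:ℝ) 1) (g x) :=
    ((hf.contDiffOn.differentiableOn one_ne_zero) _ (hf.inv_mapsTo hx)).hasDerivWithinAt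
  have hcomp := hfd.comp x hgd hf.inv_mapsTo
  have hid : HasDerivWithinAt (fun y => y)
      (derivWithin f (Set.Icc (0:ℝ) 1) (g x) * derivWithin g (Set.Icc (0:ℝ) 1) x)
      (Set.Icc (0:ℝ) 1) x :=
    hcomp.congr (fun y hy => (hf.right_inv y hy).symm) (hf.right_inv x hx).symm
  have h2 := hid.derivWithin (udI x hx)
  rw [show (fun y:ℝ => y) = id from rfl, derivWithin_id x _ (udI x hx)] at h2
  linarith [h2]

lemma inv_deriv_pos {f g : ℝ → ℝ} (hf : IsDiff01 f g) {x : ℝ} (hx : x ∈ Set.Icc (0:ℝ) 1) :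
    0 < derivWithin g (Set.Icc (0:ℝ) 1) x := by
  have h := inv_deriv_mul hf hx
  have hp := hf.deriv_pos (g x) (hf.inv_mapsTo hx)
  nlinarith [hp]

lemma IsDiff01.symm {f g : ℝ → ℝ} (hf : IsDiff01 f g) : IsDiff01 g f :=
  ⟨hf.inv_mapsTo, hf.mapsTo, hf.right_inv, hf.left_inv,
    by nth_rewrite 1 [← hf.map_zero]; rw [hf.left_inv 0 (by norm_num)],
    by nth_rewrite 1 [← hf.map_one]; rw [hf.left_inv 1 (by norm_num)],
    hf.inv_contDiffOn, hf.contDiffOn, fun x hx => inv_deriv_pos hf hx⟩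

lemma gammaEqOne_symm {f g : ℝ → ℝ} (h : GammaEqOne f g) : GammaEqOne g f := by
  unfold GammaEqOne Gamma at *
  simpa [max_comm] using h

lemma not_gammaEqOne_of_gt {f g : ℝ → ℝ}
    (hF : ContDiffOn ℝ 1 f (Set.Icc (0:ℝ) 1))
    (hm : Set.MapsTo f (Set.Icc (0:ℝ) 1) (Set.Icc (0:ℝ) 1))
    {ξ : ℝ} (hξ : ξ ∈ Set.Icc (0:ℝ) 1) (hfix : f ξ = ξ)
    (hlt : 1 < derivWithin f (Set.Icc (0:ℝ) 1) ξ) : ¬ GammaEqOne f g := by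
  intro h
  set lam := derivWithin f (Set.Icc (0:ℝ) 1) ξ with hlam
  have hlam0 : 0 < lam := lt_trans one_pos hlt
  have hiterfix : ∀ k : ℕ, f^[k] ξ = ξ := fun k => Function.iterate_fixed hfix k
  have hkey : ∀ n : ℕ, lam ^ n ≤ Gamma f g n := by
    intro n
    have h1 := iter_hasDerivWithinAt hF hm n hξ
    have h2 : derivWithin (f^[n]) (Set.Icc (0:ℝ) 1) ξ = lam ^ n := by
      rw [h1.derivWithin (udI ξ hξ)]
      simp [hiterfix, hlam]
    calc lam ^ n = |derivWithin (f^[n]) (Set.Icc (0:ℝ) 1) ξ| := by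
          rw [h2, abs_of_pos (pow_pos hlam0 n)]
      _ ≤ supAbsDeriv (f^[n]) := abs_derivWithin_le_supAbsDeriv (iter_contDiffOn hF hm n) hξ
      _ ≤ Gamma f g n := le_max_left _ _
  have hev : ∀ᶠ n : ℕ in atTop, lam ≤ (Gamma f g n) ^ (1/(n:ℝ)) := by
    filter_upwards [eventually_ge_atTop 1] with n hn
    have hne : (n:ℝ) ≠ 0 := Nat.cast_ne_zero.2 (by omega)
    have : lam = (lam ^ n) ^ (1/(n:ℝ)) := by
      rw [← Real.rpow_natCast lam n, ← Real.rpow_mul hlam0.le,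
        mul_one_div_cancel hne, Real.rpow_one]
    rw [this]
    exact Real.rpow_le_rpow (pow_pos hlam0 n).le (hkey n) (by positivity)
  have := ge_of_tendsto h hev
  linarith

lemma visits_bound {δ : ℝ} (u : ℕ → ℝ) (hmono : ∀ k, u k ≤ u (k+1))
    (hbd : ∀ n, u n - u 0 ≤ 1) (P : ℕ → Prop) [DecidablePred P]
    (hstep : ∀ k, P k → δ ≤ u (k+1) - u k) (n : ℕ) :
    δ * ((Finset.range n).filter P).card ≤ 1 := by
  calc δ * ((Finset.range n).filter P).card
      = ∑ _k ∈ (Finset.range n).filter P, δ := by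
        rw [Finset.sum_const, nsmul_eq_mul, mul_comm]
    _ ≤ ∑ k ∈ (Finset.range n).filter P, (u (k+1) - u k) :=
        Finset.sum_le_sum (fun k hk => hstep k (Finset.mem_filter.1 hk).2)
    _ ≤ ∑ k ∈ Finset.range n, (u (k+1) - u k) :=
        Finset.sum_le_sum_of_subset_of_nonneg (Finset.filter_subset _ _)
          (fun k _ _ => sub_nonneg.2 (hmono k))
    _ = u n - u 0 := Finset.sum_range_sub u n
    _ ≤ 1 := hbd n

lemma subexp {f g : ℝ → ℝ} (hf : IsDiff01 f g)
    (hfix : ∀ ξ ∈ Set.Icc (0:ℝ) 1, f ξ = ξ → derivWithin f (Set.Icc (0:ℝ) 1) ξ = 1)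
    {ε : ℝ} (hε : 0 < ε) :
    ∃ C : ℝ, 1 ≤ C ∧ ∀ n : ℕ, supAbsDeriv (f^[n]) ≤ C * Real.exp (ε * n) := by
  classical
  set I : Set ℝ := Set.Icc (0:ℝ) 1 with hI
  set φ : ℝ → ℝ := fun x => derivWithin f I x with hφ
  have φcont : ContinuousOn φ I := hf.contDiffOn.continuousOn_derivWithin udI le_rfl
  -- the "bad" compact set K
  set K : Set ℝ := I ∩ φ ⁻¹' (Set.Ioo (Real.exp (-ε)) (Real.exp ε))ᶜ with hK
  have hKsub : K ⊆ I := Set.inter_subset_left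
  have hKclosed : IsClosed K :=
    φcont.preimage_isClosed_of_isClosed isClosed_Icc isOpen_Ioo.isClosed_compl
  have hKcomp : IsCompact K := isCompact_Icc.of_isClosed_subset hKclosed hKsub
  -- no fixed points on K
  have hKnofix : ∀ x ∈ K, f x ≠ x := by
    rintro x ⟨hxI, hxc⟩ hfixx
    have h1 : φ x = 1 := hfix x hxI hfixx
    refine hxc ⟨?_, ?_⟩ <;> rw [h1]
    · exact Real.exp_lt_one_iff.2 (by linarith)
    · exact Real.one_lt_exp_iff.2 hε
  -- minimum displacement δ on K
  obtain ⟨δ, hδpos, hδ⟩ : ∃ δ > 0, ∀ x ∈ K, δ ≤ |f x - x| := by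
    rcases K.eq_empty_or_nonempty with hKe | hKne
    · exact ⟨1, one_pos, by simp [hKe]⟩
    · have hcont : ContinuousOn (fun x => |f x - x|) K :=
        ((hf.contDiffOn.continuousOn.mono hKsub).sub continuousOn_id).abs
      obtain ⟨x₀, hx₀K, hx₀⟩ := hKcomp.exists_isMinOn hKne hcont
      refine ⟨|f x₀ - x₀|, ?_, fun x hx => hx₀ hx⟩
      exact abs_pos.2 (sub_ne_zero.2 (hKnofix x₀ hx₀K))
  -- uniform bound L on φ
  obtain ⟨L, hL1, hLb⟩ : ∃ L : ℝ, 1 ≤ L ∧ ∀ x ∈ I, φ x ≤ L := by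
    obtain ⟨B, hB⟩ := (isCompact_Icc.bddAbove_image φcont)
    exact ⟨max B 1, le_max_right _ _,
      fun x hx => le_trans (hB ⟨x, hx, rfl⟩) (le_max_left _ _)⟩
  set N : ℕ := ⌈1/δ⌉₊ with hN
  refine ⟨L ^ N, one_le_pow₀ hL1, fun n => ?_⟩
  -- f is monotone on I
  have hmonoI : MonotoneOn f I := by
    apply (strictMonoOn_of_deriv_pos (convex_Icc 0 1) hf.contDiffOn.continuousOn ?_).monotoneOn
    intro x hx
    rw [interior_Icc] at hx
    have : deriv f x = derivWithin f I x :=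
      (derivWithin_of_mem_nhds (Icc_mem_nhds hx.1 hx.2)).symm
    rw [this]
    exact hf.deriv_pos x (Set.Ioo_subset_Icc_self hx)
  apply supAbsDeriv_le
  intro x hx
  have horbI : ∀ k : ℕ, f^[k] x ∈ I := fun k => hf.mapsTo.iterate k hx
  have hprod := iter_hasDerivWithinAt hf.contDiffOn hf.mapsTo n hx
  rw [hprod.derivWithin (udI x hx)]
  -- the visit set
  set P : ℕ → Prop := fun k => f^[k] x ∈ K with hP
  have horbmono : (∀ k, f^[k] x ≤ f^[k+1] x) ∨ (∀ k, f^[k+1] x ≤ f^[k] x) := by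
    rcases le_total x (f x) with hc | hc
    · left; intro k; induction k with
      | zero => simpa using hc
      | succ k ih =>
          calc f^[k+1] x = f (f^[k] x) := Function.iterate_succ_apply' f k x
            _ ≤ f (f^[k+1] x) := hmonoI (horbI k) (horbI (k+1)) ih
            _ = f^[k+1+1] x := (Function.iterate_succ_apply' f (k+1) x).symm
    · right; intro k; induction k with
      | zero => simpa using hc
      | succ k ih =>
          calc f^[k+1+1] x = f (f^[k+1] x) := Function.iterate_succ_apply' f (k+1) x
            _ ≤ f (f^[k] x) := hmonoI (horbI (k+1)) (horbI k) ih
            _ = f^[k+1] x := (Function.iterate_succ_apply' f k x).symm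
  -- visit count bound
  have hvisits : δ * ((Finset.range n).filter P).card ≤ 1 := by
    rcases horbmono with hm | hm
    · apply visits_bound (fun k => f^[k] x) hm
      · intro m
        have h1 := (horbI m).2; have h2 := (horbI 0).1; linarith
      · intro k hk
        have := hδ _ hk
        rw [← Function.iterate_succ_apply' f k x] at this
        rw [abs_of_nonneg (by linarith [hm k])] at this
        exact this
    · apply visits_bound (fun k => -(f^[k] x)) (fun k => by simpa using hm k)
      · intro m
        have h1 := (horbI m).1; have h2 := (horbI 0).2; simp only [neg_sub_neg]; linarith
      · intro k hk
        have := hδ _ hk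
        rw [← Function.iterate_succ_apply' f k x] at this
        rw [abs_of_nonpos (by linarith [hm k])] at this
        simp only [neg_sub_neg]; linarith
  have hcard : ((Finset.range n).filter P).card ≤ N := by
    have h1 : (((Finset.range n).filter P).card : ℝ) ≤ 1/δ := by
      rw [le_div_iff₀ hδpos]; linarith [hvisits]
    exact_mod_cast h1.trans (Nat.le_ceil _)
  -- bound the product
  have hsplit := Finset.prod_filter_mul_prod_filter_not (Finset.range n) P
    (fun k => φ (f^[k] x))
  have hpos : ∀ k : ℕ, 0 < φ (f^[k] x) := fun k => hf.deriv_pos _ (horbI k)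
  have h1 : ∏ k ∈ (Finset.range n).filter P, φ (f^[k] x) ≤ L ^ N := by
    calc ∏ k ∈ (Finset.range n).filter P, φ (f^[k] x)
        ≤ ∏ _k ∈ (Finset.range n).filter P, L :=
          Finset.prod_le_prod (fun k _ => (hpos k).le) (fun k _ => hLb _ (horbI k))
      _ = L ^ ((Finset.range n).filter P).card := Finset.prod_const L
      _ ≤ L ^ N := pow_le_pow_right₀ hL1 hcard
  have h2 : ∏ k ∈ (Finset.range n).filter (fun k => ¬ P k), φ (f^[k] x)
      ≤ Real.exp ε ^ n := by
    calc ∏ k ∈ (Finset.range n).filter (fun k => ¬ P k), φ (f^[k] x)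
        ≤ ∏ _k ∈ (Finset.range n).filter (fun k => ¬ P k), Real.exp ε := by
          apply Finset.prod_le_prod (fun k _ => (hpos k).le)
          intro k hk
          have hkn := Finset.mem_filter.1 hk
          have : f^[k] x ∈ φ ⁻¹' (Set.Ioo (Real.exp (-ε)) (Real.exp ε)) := by
            by_contra hcon
            exact hkn.2 ⟨horbI k, hcon⟩
          exact this.2.le
      _ = Real.exp ε ^ ((Finset.range n).filter (fun k => ¬ P k)).card :=
          Finset.prod_const _
      _ ≤ Real.exp ε ^ n :=
          pow_le_pow_right₀ (Real.one_le_exp hε.le)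
            (le_trans (Finset.card_filter_le _ _) (by simp))
  have habs : |∏ k ∈ Finset.range n, φ (f^[k] x)| = ∏ k ∈ Finset.range n, φ (f^[k] x) :=
    abs_of_pos (Finset.prod_pos (fun k _ => hpos k))
  calc |∏ k ∈ Finset.range n, φ (f^[k] x)|
      = (∏ k ∈ (Finset.range n).filter P, φ (f^[k] x)) *
        (∏ k ∈ (Finset.range n).filter (fun k => ¬ P k), φ (f^[k] x)) := by
        rw [habs, ← hsplit]
    _ ≤ L ^ N * Real.exp ε ^ n := by
        apply mul_le_mul h1 h2 (Finset.prod_nonneg (fun k _ => (hpos k).le))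
          (by positivity)
    _ = L ^ N * Real.exp (ε * n) := by
        rw [mul_comm ε (n:ℝ), Real.exp_nat_mul]

lemma tendsto_glue (G : ℕ → ℝ) (hG1 : ∀ n, 1 ≤ G n)
    (hsub : ∀ ε : ℝ, 0 < ε → ∃ C : ℝ, 1 ≤ C ∧ ∀ n : ℕ, G n ≤ C * Real.exp (ε * n)) :
    Filter.Tendsto (fun n : ℕ => (G n) ^ (1/(n:ℝ))) Filter.atTop (nhds 1) := by
  rw [tendsto_order]
  constructor
  · intro a ha
    filter_upwards [eventually_ge_atTop 1] with n _
    have h1 : (1:ℝ) ≤ (G n) ^ (1/(n:ℝ)) := by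
      have := Real.rpow_le_rpow zero_le_one (hG1 n) (by positivity : (0:ℝ) ≤ 1/(n:ℝ))
      rwa [Real.one_rpow] at this
    linarith
  · intro a ha
    set ε : ℝ := Real.log a / 2 with hε
    have hεpos : 0 < ε := by
      have := Real.log_pos ha; positivity
    obtain ⟨C, hC1, hCb⟩ := hsub ε hεpos
    have hC0 : (0:ℝ) < C := lt_of_lt_of_le one_pos hC1
    have hexplt : Real.exp ε < a := by
      have h2 : Real.exp ε ^ 2 = a := by
        rw [← Real.exp_nat_mul]
        rw [show ((2:ℕ):ℝ) * ε = Real.log a by push_cast [hε]; ring,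
          Real.exp_log (by linarith)]
      have h3 : 1 < Real.exp ε := Real.one_lt_exp_iff.2 hεpos
      nlinarith
    have htends : Filter.Tendsto (fun n : ℕ => C ^ (1/(n:ℝ)) * Real.exp ε)
        Filter.atTop (nhds (Real.exp ε)) := by
      have h4 : Filter.Tendsto (fun n : ℕ => C ^ (1/(n:ℝ))) Filter.atTop (nhds 1) := by
        have h5 : Filter.Tendsto (fun n : ℕ => Real.log C * (1/(n:ℝ))) Filter.atTop (nhds 0) := by
          simpa using (tendsto_one_div_atTop_nhds_zero_nat).const_mul (Real.log C)
        have h6 := (Real.continuous_exp.tendsto 0).comp h5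
        rw [Real.exp_zero] at h6
        refine h6.congr (fun n => ?_)
        simp [Real.rpow_def_of_pos hC0, Function.comp]
      simpa using h4.mul_const (Real.exp ε)
    filter_upwards [eventually_ge_atTop 1, htends.eventually (eventually_lt_nhds hexplt)]
      with n hn hlt
    have hne : (n:ℝ) ≠ 0 := Nat.cast_ne_zero.2 (by omega)
    have hGn0 : (0:ℝ) ≤ G n := le_trans zero_le_one (hG1 n)
    have step1 : (G n) ^ (1/(n:ℝ)) ≤ (C * Real.exp (ε * n)) ^ (1/(n:ℝ)) :=
      Real.rpow_le_rpow hGn0 (hCb n) (by positivity)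
    have step2 : (C * Real.exp (ε * n)) ^ (1/(n:ℝ)) = C ^ (1/(n:ℝ)) * Real.exp ε := by
      rw [Real.mul_rpow hC0.le (Real.exp_pos _).le]
      congr 1
      rw [Real.exp_mul, ← Real.rpow_mul (Real.exp_pos ε).le, mul_one_div_cancel hne,
        Real.rpow_one]
    linarith [step1, step2 ▸ step1]

end GammaProof

open GammaProof in

/-- For `f ∈ Diff₀[0,1]`: `γ(f) = 1` if and only if `f'(ξ) = 1` for every fixed point `ξ`
of `f` in `[0,1]`. -/
theorem gamma_eq_one_iff_deriv_fixed (f g : ℝ → ℝ) (hf : IsDiff01 f g) :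
    GammaEqOne f g ↔
      ∀ ξ ∈ Set.Icc (0:ℝ) 1, f ξ = ξ → derivWithin f (Set.Icc (0:ℝ) 1) ξ = 1 := by
  constructor
  · -- forward direction
    intro h ξ hξ hfixξ
    by_contra hne
    rcases lt_or_gt_of_ne hne with hltc | hgt
    · -- derivative < 1 at fixed point: use g
      have hgfix : g ξ = ξ := by rw [← hfixξ, hf.left_inv ξ hξ, hfixξ]
      have hmul := GammaProof.inv_deriv_mul hf hξ
      rw [hgfix] at hmul
      have hfpos := hf.deriv_pos ξ hξ
      have hggt : 1 < derivWithin g (Set.Icc (0:ℝ) 1) ξ := by nlinarith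
      exact GammaProof.not_gammaEqOne_of_gt (g := f) hf.inv_contDiffOn hf.inv_mapsTo hξ
        hgfix hggt (GammaProof.gammaEqOne_symm h)
    · exact GammaProof.not_gammaEqOne_of_gt (g := g) hf.contDiffOn hf.mapsTo hξ
        hfixξ hgt h
  · -- backward direction
    intro hp
    have hpg : ∀ ξ ∈ Set.Icc (0:ℝ) 1, g ξ = ξ →
        derivWithin g (Set.Icc (0:ℝ) 1) ξ = 1 := by
      intro ξ hξ hgfix
      have hffix : f ξ = ξ := by
        conv_lhs => rw [← hgfix]
        exact hf.right_inv ξ hξ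
      have hmul := GammaProof.inv_deriv_mul hf hξ
      rw [hgfix, hp ξ hξ hffix, one_mul] at hmul
      exact hmul
    unfold GammaEqOne
    apply GammaProof.tendsto_glue
    · intro n
      refine le_trans (GammaProof.one_le_supAbsDeriv
        (GammaProof.iter_contDiffOn hf.contDiffOn hf.mapsTo n)
        (Function.iterate_fixed hf.map_zero n)
        (Function.iterate_fixed hf.map_one n)) (le_max_left _ _)
    · intro ε hε
      obtain ⟨C₁, hC₁, h₁⟩ := GammaProof.subexp hf hp hε
      obtain ⟨C₂, hC₂, h₂⟩ := GammaProof.subexp (GammaProof.IsDiff01.symm hf) hpg hε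
      refine ⟨max C₁ C₂, le_trans hC₁ (le_max_left _ _), fun n => max_le ?_ ?_⟩
      · exact le_trans (h₁ n) (mul_le_mul_of_nonneg_right (le_max_left _ _)
          (Real.exp_pos _).le)
      · exact le_trans (h₂ n) (mul_le_mul_of_nonneg_right (le_max_right _ _)
          (Real.exp_pos _).le)
end

section
/- Let ω : [0,1] → [0,∞) be a modulus of continuity. If f ∈ Diff₀^ω[0,1], then its inverse f^{-1} belongs to Diff₀^ω[0,1]; that is, there exists a constant C(f) > 0 such that |(f^{-1})'(x) − (f^{-1})'(y)| ≤ C(f) · ω(|x−y|) for all x, y ∈ [0,1]. -/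
open Set Filter

/-- Iterated subadditivity: `ω (n*t) ≤ n * ω t`. -/
lemma modCont_nsmul {ω : ℝ → ℝ} (hω : IsModCont ω) :
    ∀ n : ℕ, ∀ t : ℝ, 0 ≤ t → (n : ℝ) * t ≤ 1 → ω ((n : ℝ) * t) ≤ (n : ℝ) * ω t := by
  intro n
  induction n with
  | zero => intro t ht h1; simp [hω.map_zero]
  | succ n ih =>
    intro t ht h1
    have hnt : 0 ≤ (n : ℝ) * t := by positivity
    have h1' : (n : ℝ) * t + t ≤ 1 := by
      have : ((n : ℝ) + 1) * t = (n : ℝ) * t + t := by ring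
      rw [Nat.cast_succ, this] at h1; exact h1
    have hsum : ω ((n : ℝ) * t + t) ≤ ω ((n : ℝ) * t) + ω t :=
      hω.subadd _ _ hnt ht h1'
    have hn1 : (n : ℝ) * t ≤ 1 := by nlinarith
    have := ih t ht hn1
    have heq : ((n : ℝ) + 1) * t = (n : ℝ) * t + t := by ring
    rw [Nat.cast_succ, heq]
    nlinarith
/-- Scaling: if `s ≤ N * t` with `s, t ∈ [0,1]`, then `ω s ≤ N * ω t`. -/
lemma modCont_scale {ω : ℝ → ℝ} (hω : IsModCont ω) (N : ℕ) (hN : 1 ≤ N)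
    (s t : ℝ) (hs : s ∈ Set.Icc (0:ℝ) 1) (ht : t ∈ Set.Icc (0:ℝ) 1)
    (h : s ≤ (N : ℝ) * t) : ω s ≤ (N : ℝ) * ω t := by
  have hN0 : (0:ℝ) < N := by exact_mod_cast hN
  by_cases hc : (N : ℝ) * t ≤ 1
  · have h1 : ω s ≤ ω ((N : ℝ) * t) := by
      exact hω.monotoneOn hs ⟨mul_nonneg hN0.le ht.1, hc⟩ h
    exact h1.trans (modCont_nsmul hω N t ht.1 hc)
  · push_neg at hc
    have hinv : (1 : ℝ) / N ≤ t := by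
      rw [div_le_iff₀ hN0]; nlinarith
    have hNinv : (N : ℝ) * (1 / N) = 1 := by field_simp
    have h1 : ω s ≤ ω 1 := hω.monotoneOn hs ⟨zero_le_one, le_rfl⟩ hs.2
    have h2 : ω 1 ≤ (N : ℝ) * ω (1 / N) := by
      have := modCont_nsmul hω N (1 / N) (by positivity) (le_of_eq hNinv)
      rwa [hNinv] at this
    have hN1' : (1:ℝ) ≤ N := Nat.one_le_cast.2 hN
    have h3 : ω (1 / N) ≤ ω t := by
      apply hω.monotoneOn ⟨by positivity, _⟩ ht hinv
      rw [div_le_iff₀ hN0]; linarith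
    nlinarith

/-- `Diff₀^ω[0,1]` is closed under inversion: if `f ∈ Diff₀^ω[0,1]` with inverse `g`,
then `g ∈ Diff₀^ω[0,1]`. -/
theorem diffOmega_inv (ω : ℝ → ℝ) (hω : IsModCont ω)
    (f g : ℝ → ℝ) (hf : IsDiff01 f g) (hfω : InDiffOmega ω f) :
    ∃ C > 0, ∀ x ∈ Set.Icc (0:ℝ) 1, ∀ y ∈ Set.Icc (0:ℝ) 1,
      |derivWithin g (Set.Icc (0:ℝ) 1) x - derivWithin g (Set.Icc (0:ℝ) 1) y|
        ≤ C * ω |x - y| := by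
  obtain ⟨C, hC, hfC⟩ := hfω
  set I : Set ℝ := Set.Icc (0:ℝ) 1 with hI
  have hUD : UniqueDiffOn ℝ I := uniqueDiffOn_Icc zero_lt_one
  set F : ℝ → ℝ := fun x => derivWithin f I x with hF
  -- continuity of the derivative and the minimum m
  have hFc : ContinuousOn F I := hf.contDiffOn.continuousOn_derivWithin hUD le_rfl
  obtain ⟨z, hz, hmin⟩ := isCompact_Icc.exists_isMinOn (Set.nonempty_Icc.2 zero_le_one) hFc
  set m : ℝ := F z with hm
  have hm0 : 0 < m := hf.deriv_pos z hz
  have hmle : ∀ x ∈ I, m ≤ F x := fun x hx => hmin hx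
  -- key identity : F (g x) * derivWithin g I x = 1
  have hgd : DifferentiableOn ℝ g I := hf.inv_contDiffOn.differentiableOn one_ne_zero
  have hfd : DifferentiableOn ℝ f I := hf.contDiffOn.differentiableOn one_ne_zero
  have key : ∀ x ∈ I, derivWithin g I x = 1 / F (g x) := by
    intro x hx
    have hgx : g x ∈ I := hf.inv_mapsTo hx
    have h1 : HasDerivWithinAt g (derivWithin g I x) I x :=
      (hgd x hx).hasDerivWithinAt
    have h2 : HasDerivWithinAt f (F (g x)) I (g x) :=
      (hfd (g x) hgx).hasDerivWithinAt
    have h3 : HasDerivWithinAt (f ∘ g) (F (g x) * derivWithin g I x) I x :=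
      h2.comp x h1 hf.inv_mapsTo
    have h4 : HasDerivWithinAt (fun y => y) (F (g x) * derivWithin g I x) I x :=
      h3.congr (fun y hy => (hf.right_inv y hy).symm) (hf.right_inv x hx).symm
    have h5 : derivWithin (fun y : ℝ => y) I x = F (g x) * derivWithin g I x :=
      h4.derivWithin (hUD x hx)
    rw [show (fun y : ℝ => y) = id from rfl, derivWithin_id x I (hUD x hx)] at h5
    have hFpos : 0 < F (g x) := hf.deriv_pos _ hgx
    field_simp
    linarith [h5.symm]
  -- g is (1/m)-Lipschitz on I
  have hgbound : ∀ x ∈ I, ‖derivWithin g I x‖ ≤ 1 / m := by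
    intro x hx
    rw [key x hx]
    have hFpos : 0 < F (g x) := hf.deriv_pos _ (hf.inv_mapsTo hx)
    rw [Real.norm_eq_abs, abs_of_pos (by positivity)]
    exact one_div_le_one_div_of_le hm0 (hmle _ (hf.inv_mapsTo hx))
  have hlip : ∀ x ∈ I, ∀ y ∈ I, |g x - g y| ≤ (1 / m) * |x - y| := by
    intro x hx y hy
    have := (convex_Icc (0:ℝ) 1).norm_image_sub_le_of_norm_derivWithin_le hgd hgbound hy hx
    simpa [Real.norm_eq_abs] using this
  -- the constant
  set N : ℕ := ⌈1 / m⌉₊ with hN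
  have hN1 : 1 ≤ N := Nat.one_le_ceil_iff.2 (by positivity)
  refine ⟨C * N / m ^ 2, by positivity, ?_⟩
  intro x hx y hy
  have hgx : g x ∈ I := hf.inv_mapsTo hx
  have hgy : g y ∈ I := hf.inv_mapsTo hy
  have hFx : 0 < F (g x) := hf.deriv_pos _ hgx
  have hFy : 0 < F (g y) := hf.deriv_pos _ hgy
  have hmx : m ≤ F (g x) := hmle _ hgx
  have hmy : m ≤ F (g y) := hmle _ hgy
  -- difference of derivatives of g
  have hdiff : |derivWithin g I x - derivWithin g I y|
      = |F (g y) - F (g x)| / (F (g x) * F (g y)) := by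
    rw [key x hx, key y hy]
    rw [div_sub_div _ _ (ne_of_gt hFx) (ne_of_gt hFy), abs_div,
      abs_of_pos (mul_pos hFx hFy)]
    ring_nf
  -- |g x - g y| and |x - y| are in [0,1]
  have habs_xy : |x - y| ∈ I := by
    constructor
    · exact abs_nonneg _
    · rw [abs_sub_le_iff]
      constructor <;> [linarith [hx.1, hx.2, hy.1, hy.2]; linarith [hx.1, hx.2, hy.1, hy.2]]
  have habs_g : |g x - g y| ∈ I := by
    constructor
    · exact abs_nonneg _
    · rw [abs_sub_le_iff]
      constructor <;> [linarith [hgx.1, hgx.2, hgy.1, hgy.2]; linarith [hgx.1, hgx.2, hgy.1, hgy.2]]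
  have homega_g : ω |g y - g x| ≤ (N : ℝ) * ω |x - y| := by
    rw [abs_sub_comm]
    apply modCont_scale hω N hN1 _ _ habs_g habs_xy
    calc |g x - g y| ≤ (1 / m) * |x - y| := hlip x hx y hy
      _ ≤ (N : ℝ) * |x - y| := by
          apply mul_le_mul_of_nonneg_right (Nat.le_ceil _) (abs_nonneg _)
  have hF_omega : |F (g y) - F (g x)| ≤ C * ω |g y - g x| := hfC _ hgy _ hgx
  have hω_nonneg : 0 ≤ ω |x - y| := hω.nonneg _ habs_xy
  have hprod : m ^ 2 ≤ F (g x) * F (g y) := by nlinarith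
  rw [hdiff]
  have hstep : |F (g y) - F (g x)| / (F (g x) * F (g y))
      ≤ |F (g y) - F (g x)| / m ^ 2 := by
    apply div_le_div_of_nonneg_left (abs_nonneg _) (by positivity) hprod
  refine hstep.trans ?_
  rw [div_le_iff₀ (by positivity : (0:ℝ) < m ^ 2)]
  have : C * N / m ^ 2 * ω |x - y| * m ^ 2 = C * ((N : ℝ) * ω |x - y|) := by
    field_simp
  rw [this]
  calc |F (g y) - F (g x)| ≤ C * ω |g y - g x| := hF_omega
    _ ≤ C * ((N : ℝ) * ω |x - y|) := by
        apply mul_le_mul_of_nonneg_left homega_g (le_of_lt hC)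
end

section
/- For every modulus of continuity ω : [0,1] → [0,∞) there exists a concave modulus of continuity ω* : [0,1] → [0,∞) such that ω(x) ≤ ω*(x) ≤ 2·ω(x) for all x ∈ [0,1]. -/
open Set Filter

/-- **Lemma 3.** Every modulus of continuity admits an equivalent concave modulus of
continuity: `ω ≤ ω* ≤ 2ω` on `[0,1]`. -/
theorem exists_concave_modulus (ω : ℝ → ℝ) (hω : IsModCont ω) :
    ∃ ωs : ℝ → ℝ, IsModCont ωs ∧ ConcaveOn ℝ (Set.Icc (0:ℝ) 1) ωs ∧
      ∀ x ∈ Set.Icc (0:ℝ) 1, ω x ≤ ωs x ∧ ωs x ≤ 2 * ω x := by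
  obtain ⟨hcont, hmono, hnn, h0, hsub⟩ := hω
  set S : Set (ℝ × ℝ) :=
    {p | 0 ≤ p.1 ∧ ∀ t ∈ Set.Icc (0:ℝ) 1, ω t ≤ p.1 * t + p.2} with hSdef
  set F : ℝ → ℝ := fun x => sInf ((fun p : ℝ × ℝ => p.1 * x + p.2) '' S) with hFdef
  have h01 : (0:ℝ) ∈ Set.Icc (0:ℝ) 1 := ⟨le_refl _, zero_le_one⟩
  have h11 : (1:ℝ) ∈ Set.Icc (0:ℝ) 1 := ⟨zero_le_one, le_refl _⟩
  have hSne : S.Nonempty := by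
    refine ⟨(0, ω 1), le_refl 0, fun t ht => ?_⟩
    simpa using hmono ht h11 ht.2
  have hlbS : ∀ x ∈ Set.Icc (0:ℝ) 1, ∀ p ∈ S, ω x ≤ p.1 * x + p.2 :=
    fun x hx p hp => hp.2 x hx
  have hbdd : ∀ x ∈ Set.Icc (0:ℝ) 1, BddBelow ((fun p : ℝ × ℝ => p.1 * x + p.2) '' S) := by
    intro x hx
    exact ⟨ω x, by rintro v ⟨p, hp, rfl⟩; exact hlbS x hx p hp⟩
  have hge : ∀ x ∈ Set.Icc (0:ℝ) 1, ω x ≤ F x := by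
    intro x hx
    exact le_csInf (hSne.image _) (by rintro v ⟨p, hp, rfl⟩; exact hlbS x hx p hp)
  have hleP : ∀ x ∈ Set.Icc (0:ℝ) 1, ∀ p ∈ S, F x ≤ p.1 * x + p.2 := by
    intro x hx p hp
    exact csInf_le (hbdd x hx) ⟨p, hp, rfl⟩
  -- iteration lemma from subadditivity
  have hiter : ∀ n : ℕ, ∀ x ∈ Set.Icc (0:ℝ) 1, ∀ t ∈ Set.Icc (0:ℝ) 1,
      t ≤ ((n:ℝ)+1) * x → ω t ≤ ((n:ℝ)+1) * ω x := by
    intro n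
    induction n with
    | zero =>
      intro x hx t ht h
      simpa using hmono ht hx (by simpa using h)
    | succ n ih =>
      intro x hx t ht h
      by_cases hc : t ≤ x
      · have h1 := hmono ht hx hc
        have hx0 := hnn x hx
        push_cast
        nlinarith
      · push_neg at hc
        have htx : t - x ∈ Set.Icc (0:ℝ) 1 := ⟨by linarith [hc.le], by linarith [ht.2, hx.1]⟩
        have h1 : t - x ≤ ((n:ℝ)+1) * x := by push_cast at h; linarith
        have h2 := ih x hx (t - x) htx h1
        have h3 : ω t ≤ ω x + ω (t - x) := by
          have := hsub x (t - x) hx.1 htx.1 (by linarith [ht.2])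
          simpa using this
        push_cast
        linarith
  -- upper bound by 2ω
  have hle2 : ∀ x ∈ Set.Icc (0:ℝ) 1, F x ≤ 2 * ω x := by
    intro x hx
    rcases eq_or_lt_of_le hx.1 with hx0 | hx0
    · -- x = 0
      have hF0le : ∀ ε > (0:ℝ), F 0 ≤ ε := by
        intro ε hε
        have hc0 : ContinuousWithinAt ω (Set.Icc (0:ℝ) 1) 0 := hcont 0 h01
        rw [Metric.continuousWithinAt_iff] at hc0
        obtain ⟨δ, hδ, hδ'⟩ := hc0 ε hε
        have hmem : (ω 1 / δ, ε) ∈ S := by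
          refine ⟨div_nonneg (hnn 1 h11) hδ.le, fun t ht => ?_⟩
          by_cases hcase : t < δ
          · have hd : dist t 0 < δ := by
              rw [Real.dist_eq, sub_zero, abs_of_nonneg ht.1]; exact hcase
            have := hδ' ht hd
            rw [Real.dist_eq, h0, sub_zero] at this
            have h1 : ω t < ε := lt_of_abs_lt this
            have h2 : (0:ℝ) ≤ ω 1 / δ * t :=
              mul_nonneg (div_nonneg (hnn 1 h11) hδ.le) ht.1
            linarith
          · push_neg at hcase
            have h1 : ω t ≤ ω 1 := hmono ht h11 ht.2
            have h2 : ω 1 ≤ ω 1 / δ * t := by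
              rw [div_mul_eq_mul_div, le_div_iff₀ hδ]
              nlinarith [hnn 1 h11]
            linarith
        have := hleP 0 h01 _ hmem
        simpa using this
      have hF00 : F 0 ≤ 0 := le_of_forall_pos_le_add (by intro ε hε; simpa using hF0le ε hε)
      rw [← hx0, h0]
      linarith
    · -- x > 0
      have hmem : (ω x / x, ω x) ∈ S := by
        refine ⟨div_nonneg (hnn x hx) hx0.le, fun t ht => ?_⟩
        set n := ⌊t / x⌋₊ with hn
        have hn1 : t / x < (n:ℝ) + 1 := Nat.lt_floor_add_one (t / x)
        have hn2 : (n:ℝ) ≤ t / x := Nat.floor_le (div_nonneg ht.1 hx0.le)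
        have ht1 : t ≤ ((n:ℝ)+1) * x := by
          rw [← div_le_iff₀ hx0] at *
          linarith
        have h2 := hiter n x hx t ht ht1
        have h3 : ((n:ℝ)+1) * ω x ≤ (t/x + 1) * ω x := by
          have := hnn x hx
          nlinarith
        have h4 : (t/x + 1) * ω x = ω x / x * t + ω x := by
          field_simp
        linarith
      have h5 := hleP x hx _ hmem
      have h6 : ω x / x * x + ω x = 2 * ω x := by
        field_simp
        ring
      linarith
  -- concavity
  have hconc : ConcaveOn ℝ (Set.Icc (0:ℝ) 1) F := by
    refine ⟨convex_Icc 0 1, fun x hx y hy a b ha hb hab => ?_⟩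
    refine le_csInf (hSne.image _) ?_
    rintro v ⟨p, hp, rfl⟩
    have h1 := hleP x hx p hp
    have h2 := hleP y hy p hp
    simp only [smul_eq_mul]
    have e1 : a * F x ≤ a * (p.1 * x + p.2) := mul_le_mul_of_nonneg_left h1 ha
    have e2 : b * F y ≤ b * (p.1 * y + p.2) := mul_le_mul_of_nonneg_left h2 hb
    have e3 : a * (p.1 * x + p.2) + b * (p.1 * y + p.2)
        = p.1 * (a * x + b * y) + (a + b) * p.2 := by ring
    rw [hab, one_mul] at e3
    linarith
  -- monotone
  have hmonoF : MonotoneOn F (Set.Icc (0:ℝ) 1) := by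
    intro x hx y hy hxy
    refine le_csInf (hSne.image _) ?_
    rintro v ⟨p, hp, rfl⟩
    have h1 := hleP x hx p hp
    have h2 : p.1 * x ≤ p.1 * y := mul_le_mul_of_nonneg_left hxy hp.1
    simp only []
    linarith
  -- F 0 = 0
  have hF0 : F 0 = 0 := by
    have h1 : F 0 ≤ 0 := by have := hle2 0 h01; rw [h0] at this; linarith
    have h2 : 0 ≤ F 0 := by have := hge 0 h01; rw [h0] at this; linarith
    linarith
  -- nonneg
  have hnnF : ∀ x ∈ Set.Icc (0:ℝ) 1, 0 ≤ F x :=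
    fun x hx => (hnn x hx).trans (hge x hx)
  -- subadditivity of F from concavity
  have hsubF : ∀ a b : ℝ, 0 ≤ a → 0 ≤ b → a + b ≤ 1 → F (a + b) ≤ F a + F b := by
    intro a b ha hb hab
    rcases eq_or_lt_of_le (add_nonneg ha hb) with hz | hz
    · have ha0 : a = 0 := by linarith
      have hb0 : b = 0 := by linarith
      simp [ha0, hb0, hF0]
    · have hzI : a + b ∈ Set.Icc (0:ℝ) 1 := ⟨hz.le, hab⟩
      have key : ∀ c, 0 ≤ c → c ≤ a + b → c / (a+b) * F (a+b) ≤ F c := by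
        intro c hc hcz
        have hl1 : (0:ℝ) ≤ c / (a+b) := div_nonneg hc hz.le
        have hl2 : (0:ℝ) ≤ 1 - c / (a+b) := by
          rw [sub_nonneg, div_le_one hz]
          linarith
        have hcc := hconc.2 hzI h01 hl1 hl2 (by ring)
        simp only [smul_eq_mul, mul_zero, add_zero, hF0] at hcc
        rw [div_mul_cancel₀ c hz.ne'] at hcc
        exact hcc
      have k1 := key a ha (by linarith)
      have k2 := key b hb (by linarith)
      have hsum : a / (a+b) * F (a+b) + b / (a+b) * F (a+b) = F (a+b) := by
        rw [← add_mul, ← add_div, div_self hz.ne', one_mul]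
      linarith
  -- continuity
  have hcontF : ContinuousOn F (Set.Icc (0:ℝ) 1) := by
    intro x hx
    rw [Metric.continuousWithinAt_iff]
    intro ε hε
    have hc0 : ContinuousWithinAt ω (Set.Icc (0:ℝ) 1) 0 := hcont 0 h01
    rw [Metric.continuousWithinAt_iff] at hc0
    obtain ⟨δ, hδ, hδ'⟩ := hc0 (ε/2) (by linarith)
    refine ⟨δ, hδ, fun y hy hyx => ?_⟩
    have habs : |y - x| ∈ Set.Icc (0:ℝ) 1 :=
      ⟨abs_nonneg _, abs_le.2 ⟨by linarith [hy.1, hx.2], by linarith [hy.2, hx.1]⟩⟩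
    have hd : F |y - x| ≤ 2 * ω |y - x| := hle2 _ habs
    have hω' : ω |y - x| < ε/2 := by
      have hdd : dist |y - x| 0 < δ := by
        rw [Real.dist_eq, sub_zero, abs_abs]
        exact hyx
      have := hδ' habs hdd
      rw [Real.dist_eq, h0, sub_zero] at this
      exact lt_of_abs_lt this
    have key : |F y - F x| ≤ F |y - x| := by
      rcases le_total x y with h | h
      · have h1 : F y ≤ F x + F (y - x) := by
          have := hsubF x (y - x) hx.1 (by linarith) (by simpa using hy.2)
          simpa using this
        have h2 : F x ≤ F y := hmonoF hx hy h
        rw [abs_of_nonneg (by linarith : (0:ℝ) ≤ F y - F x),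
          abs_of_nonneg (by linarith : (0:ℝ) ≤ y - x)]
        linarith
      · have h1 : F x ≤ F y + F (x - y) := by
          have := hsubF y (x - y) hy.1 (by linarith) (by simpa using hx.2)
          simpa using this
        have h2 : F y ≤ F x := hmonoF hy hx h
        rw [abs_of_nonpos (by linarith : F y - F x ≤ 0),
          abs_of_nonpos (by linarith : y - x ≤ 0)]
        have : -(y - x) = x - y := by ring
        rw [this]
        linarith
    rw [Real.dist_eq]
    calc |F y - F x| ≤ F |y - x| := key
      _ ≤ 2 * ω |y - x| := hd
      _ < ε := by linarith
  exact ⟨F, ⟨hcontF, hmonoF, hnnF, hF0, hsubF⟩, hconc,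
    fun x hx => ⟨hge x hx, hle2 x hx⟩⟩
end

section
/- Let f ∈ Diff₀[0,1] with f continuously differentiable, let φ(x) = f(x) − x, and set m = min_{[0,1]} φ' and M = max_{[0,1]} φ' (note m > −1 since f' > 0). If x ∈ [0,1] satisfies φ(x) > 0, then for every y ∈ [x, f(x)] one has φ(y) > 0 and 1/(1+M) ≤ φ(x)/φ(y) ≤ 1/(1+m). -/
open Set Filter

/-- **Claim 1(a).** For `f ∈ Diff₀[0,1]` with displacement `φ(x) = f(x) - x`, minimum `m`
and maximum `M` of `φ'` on `[0,1]` (with `m > -1`): if `φ(x) > 0` then for all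
`y ∈ [x, f(x)]` one has `φ(y) > 0` and `1/(1+M) ≤ φ(x)/φ(y) ≤ 1/(1+m)`. -/
theorem displacement_ratio_bound (f g : ℝ → ℝ) (hf : IsDiff01 f g)
    (m M : ℝ)
    (hm : IsLeast
      ((fun x => derivWithin (fun y => f y - y) (Set.Icc (0:ℝ) 1) x) '' Set.Icc (0:ℝ) 1) m)
    (hM : IsGreatest
      ((fun x => derivWithin (fun y => f y - y) (Set.Icc (0:ℝ) 1) x) '' Set.Icc (0:ℝ) 1) M)
    (hm1 : -1 < m)
    (x : ℝ) (hx : x ∈ Set.Icc (0:ℝ) 1) (hφx : 0 < f x - x) :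
    ∀ y ∈ Set.Icc x (f x),
      0 < f y - y ∧
      1 / (1 + M) ≤ (f x - x) / (f y - y) ∧
      (f x - x) / (f y - y) ≤ 1 / (1 + m) := by
  set I : Set ℝ := Set.Icc (0:ℝ) 1 with hI
  set φ : ℝ → ℝ := fun y => f y - y with hφ
  have hφcont : ContinuousOn φ I :=
    (hf.contDiffOn.continuousOn).sub continuousOn_id
  have hφdiffOn : DifferentiableOn ℝ φ I :=
    ((hf.contDiffOn.differentiableOn one_ne_zero).sub differentiableOn_id)
  have hint : interior I = Set.Ioo (0:ℝ) 1 := interior_Icc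
  have hdiffint : DifferentiableOn ℝ φ (interior I) := by
    rw [hint]; exact hφdiffOn.mono Set.Ioo_subset_Icc_self
  have hderiv_eq : ∀ t ∈ interior I, deriv φ t = derivWithin φ I t := by
    intro t ht
    have hnb : I ∈ nhds t := mem_interior_iff_mem_nhds.mp ht
    rw [derivWithin_of_mem_nhds hnb]
  have hmle : ∀ t ∈ interior I, m ≤ deriv φ t := by
    intro t ht
    rw [hderiv_eq t ht]
    exact hm.2 ⟨t, interior_subset ht, rfl⟩
  have hMge : ∀ t ∈ interior I, deriv φ t ≤ M := by
    intro t ht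
    rw [hderiv_eq t ht]
    exact hM.2 ⟨t, interior_subset ht, rfl⟩
  have keyLower : ∀ a ∈ I, ∀ b ∈ I, a ≤ b → m * (b - a) ≤ φ b - φ a :=
    (convex_Icc 0 1).mul_sub_le_image_sub_of_le_deriv hφcont hdiffint hmle
  have keyUpper : ∀ a ∈ I, ∀ b ∈ I, a ≤ b → φ b - φ a ≤ M * (b - a) :=
    (convex_Icc 0 1).image_sub_le_mul_sub_of_deriv_le hφcont hdiffint hMge
  have h0I : (0:ℝ) ∈ I := by simp [hI]
  have h1I : (1:ℝ) ∈ I := by simp [hI]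
  have hφ0 : φ 0 = 0 := by simp [hφ, hf.map_zero]
  have hφ1 : φ 1 = 0 := by simp [hφ, hf.map_one]
  have hm0 : m ≤ 0 := by
    have := keyLower 0 h0I 1 h1I zero_le_one
    rw [hφ0, hφ1] at this; linarith
  have hM0 : 0 ≤ M := by
    have := keyUpper 0 h0I 1 h1I zero_le_one
    rw [hφ0, hφ1] at this; linarith
  have hfxI : f x ∈ I := hf.mapsTo hx
  intro y hy
  have hyI : y ∈ I := ⟨le_trans hx.1 hy.1, le_trans hy.2 hfxI.2⟩
  have hxy : x ≤ y := hy.1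
  have hyx : y - x ≤ φ x := by simp only [hφ]; linarith [hy.2]
  have hL := keyLower x hx y hyI hxy
  have hU := keyUpper x hx y hyI hxy
  have hlow : (1 + m) * φ x ≤ φ y := by
    nlinarith [hy.1, sub_nonneg.mpr hxy]
  have hhigh : φ y ≤ (1 + M) * φ x := by
    nlinarith [sub_nonneg.mpr hxy]
  have h1m : 0 < 1 + m := by linarith
  have h1M : 0 < 1 + M := by linarith
  have hφy : 0 < φ y := lt_of_lt_of_le (by positivity) hlow
  have he : φ x = f x - x := rfl
  rw [he] at hlow hhigh
  refine ⟨hφy, ?_, ?_⟩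
  · rw [div_le_div_iff₀ h1M hφy]
    linarith
  · rw [div_le_div_iff₀ hφy h1m]
    linarith
end

section
/- Let f ∈ Diff₀[0,1] with f continuously differentiable, let φ(x) = f(x) − x, set m = min_{[0,1]} φ' and M = max_{[0,1]} φ' (note m > −1), and let x₁ ∈ (0,1) with φ(x₁) > 0. Define x_{k+1} = f(x_k) for k ≥ 1. Then for every n ∈ ℕ one has φ(t) > 0 for all t ∈ [x₁, x_{n+1}], and n/(1+M) ≤ ∫_{x₁}^{x_{n+1}} dt/φ(t) ≤ n/(1+m). -/
open Set Filter

/-- **Claim 1(b).** With notation as in Claim 1(a), for an orbit `x_{k+1} = f(x_k)` starting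
at `x₁ ∈ (0,1)` with `φ(x₁) > 0`: `φ > 0` on `[x₁, x_{n+1}]` and
`n/(1+M) ≤ ∫_{x₁}^{x_{n+1}} dt/φ(t) ≤ n/(1+m)`. -/
theorem displacement_integral_bound (f g : ℝ → ℝ) (hf : IsDiff01 f g)
    (m M : ℝ)
    (hm : IsLeast
      ((fun x => derivWithin (fun y => f y - y) (Set.Icc (0:ℝ) 1) x) '' Set.Icc (0:ℝ) 1) m)
    (hM : IsGreatest
      ((fun x => derivWithin (fun y => f y - y) (Set.Icc (0:ℝ) 1) x) '' Set.Icc (0:ℝ) 1) M)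
    (hm1 : -1 < m)
    (x₁ : ℝ) (hx₁ : x₁ ∈ Set.Ioo (0:ℝ) 1) (hφx₁ : 0 < f x₁ - x₁) :
    ∀ n : ℕ, 1 ≤ n →
      (∀ t ∈ Set.Icc x₁ (f^[n] x₁), 0 < f t - t) ∧
      (n:ℝ) / (1 + M) ≤ (∫ t in x₁..(f^[n] x₁), 1 / (f t - t)) ∧
      (∫ t in x₁..(f^[n] x₁), 1 / (f t - t)) ≤ (n:ℝ) / (1 + m) := by
  -- Notation and basic facts
  have h01 : (0:ℝ) < 1 := one_pos
  have hI : Set.OrdConnected (Set.Icc (0:ℝ) 1) := ordConnected_Icc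
  have hfc : ContinuousOn f (Set.Icc (0:ℝ) 1) := hf.contDiffOn.continuousOn
  have hφc : ContinuousOn (fun t => f t - t) (Set.Icc (0:ℝ) 1) := hfc.sub continuousOn_id
  have hmemnhds : ∀ x ∈ Set.Ioo (0:ℝ) 1, Set.Icc (0:ℝ) 1 ∈ nhds x := fun x hx =>
    Icc_mem_nhds hx.1 hx.2
  have hdiffat : ∀ x ∈ Set.Ioo (0:ℝ) 1, DifferentiableAt ℝ f x := by
    intro x hx
    exact ((hf.contDiffOn.differentiableOn one_ne_zero) x (Set.Ioo_subset_Icc_self hx)).differentiableAt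
      (hmemnhds x hx)
  have hderiv_eq : ∀ x ∈ Set.Ioo (0:ℝ) 1, derivWithin f (Set.Icc (0:ℝ) 1) x = deriv f x :=
    fun x hx => derivWithin_of_mem_nhds (hmemnhds x hx)
  have hφderiv : ∀ x ∈ Set.Ioo (0:ℝ) 1,
      derivWithin (fun y => f y - y) (Set.Icc (0:ℝ) 1) x = deriv f x - 1 := by
    intro x hx
    rw [derivWithin_of_mem_nhds (hmemnhds x hx)]
    rw [deriv_fun_sub (hdiffat x hx) differentiableAt_fun_id]
    simp
  have hx₁I : x₁ ∈ Set.Icc (0:ℝ) 1 := ⟨hx₁.1.le, hx₁.2.le⟩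
  -- m ≤ φ' ≤ M pointwise
  have hmle : ∀ x ∈ Set.Icc (0:ℝ) 1,
      m ≤ derivWithin (fun y => f y - y) (Set.Icc (0:ℝ) 1) x := fun x hx => hm.2 ⟨x, hx, rfl⟩
  have hMge : ∀ x ∈ Set.Icc (0:ℝ) 1,
      derivWithin (fun y => f y - y) (Set.Icc (0:ℝ) 1) x ≤ M := fun x hx => hM.2 ⟨x, hx, rfl⟩
  -- strict monotonicity of f on [0,1]
  have hsm : StrictMonoOn f (Set.Icc (0:ℝ) 1) := by
    apply strictMonoOn_of_deriv_pos (convex_Icc 0 1) hfc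
    intro x hx
    rw [interior_Icc] at hx
    rw [← hderiv_eq x hx]
    exact hf.deriv_pos x (Set.Ioo_subset_Icc_self hx)
  -- MVT-type one-sided estimates
  have hMmono : MonotoneOn (fun x => M * x - (f x - x)) (Set.Icc (0:ℝ) 1) := by
    apply monotoneOn_of_deriv_nonneg (convex_Icc 0 1)
    · exact (continuousOn_const.mul continuousOn_id).sub hφc
    · intro x hx
      rw [interior_Icc] at hx
      exact (((differentiableAt_const M).mul differentiableAt_fun_id).sub
        ((hdiffat x hx).sub differentiableAt_fun_id)).differentiableWithinAt
    · intro x hx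
      rw [interior_Icc] at hx
      have hd : HasDerivAt (fun x => M * x - (f x - x)) (M * 1 - (deriv f x - 1)) x := by
        exact ((hasDerivAt_id x).const_mul M).sub (((hdiffat x hx).hasDerivAt).sub
          (hasDerivAt_id x))
      rw [hd.deriv]
      have := hMge x (Set.Ioo_subset_Icc_self hx)
      rw [hφderiv x hx] at this
      linarith
  have hmmono : MonotoneOn (fun x => (f x - x) - m * x) (Set.Icc (0:ℝ) 1) := by
    apply monotoneOn_of_deriv_nonneg (convex_Icc 0 1)
    · exact hφc.sub (continuousOn_const.mul continuousOn_id)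
    · intro x hx
      rw [interior_Icc] at hx
      exact (((hdiffat x hx).sub differentiableAt_fun_id).sub
        ((differentiableAt_const m).mul differentiableAt_fun_id)).differentiableWithinAt
    · intro x hx
      rw [interior_Icc] at hx
      have hd : HasDerivAt (fun x => (f x - x) - m * x) ((deriv f x - 1) - m * 1) x := by
        exact (((hdiffat x hx).hasDerivAt).sub (hasDerivAt_id x)).sub
          ((hasDerivAt_id x).const_mul m)
      rw [hd.deriv]
      have := hmle x (Set.Ioo_subset_Icc_self hx)
      rw [hφderiv x hx] at this
      linarith
  have hMVT_up : ∀ a ∈ Set.Icc (0:ℝ) 1, ∀ b ∈ Set.Icc (0:ℝ) 1, a ≤ b →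
      (f b - b) - (f a - a) ≤ M * (b - a) := by
    intro a ha b hb hab
    have := hMmono ha hb hab
    simp only at this
    linarith
  have hMVT_lo : ∀ a ∈ Set.Icc (0:ℝ) 1, ∀ b ∈ Set.Icc (0:ℝ) 1, a ≤ b →
      m * (b - a) ≤ (f b - b) - (f a - a) := by
    intro a ha b hb hab
    have := hmmono ha hb hab
    simp only at this
    linarith
  -- sign facts: 0 < M and m ≤ 0
  have hφ0 : f 0 - 0 = 0 := by rw [hf.map_zero]; ring
  have hφ1 : f 1 - 1 = 0 := by rw [hf.map_one]; ring
  have hMpos : 0 < M := by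
    have := hMVT_up 0 (Set.left_mem_Icc.2 h01.le) x₁ hx₁I hx₁.1.le
    nlinarith [hx₁.1]
  have hmneg : m ≤ 0 := by
    have := hMVT_lo x₁ hx₁I 1 (Set.right_mem_Icc.2 h01.le) hx₁.2.le
    nlinarith [hx₁.2]
  have h1M : (0:ℝ) < 1 + M := by linarith
  have h1m : (0:ℝ) < 1 + m := by linarith
  -- The first fixed point z of f to the right of x₁
  set T : Set ℝ := Set.Icc x₁ 1 ∩ (fun t => f t - t) ⁻¹' Set.Iic 0 with hT
  have hTclosed : IsClosed T :=
    (hφc.mono (Set.Icc_subset_Icc hx₁.1.le le_rfl)).preimage_isClosed_of_isClosed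
      isClosed_Icc isClosed_Iic
  have hTne : T.Nonempty := ⟨1, ⟨hx₁.2.le, le_rfl⟩, by simp [hφ1]⟩
  have hTbdd : BddBelow T := ⟨x₁, fun t ht => ht.1.1⟩
  set z : ℝ := sInf T with hz
  have hzT : z ∈ T := hTclosed.csInf_mem hTne hTbdd
  have hx₁z : x₁ ≤ z := hzT.1.1
  have hz1 : z ≤ 1 := hzT.1.2
  have hzI : z ∈ Set.Icc (0:ℝ) 1 := ⟨hx₁.1.le.trans hx₁z, hz1⟩
  have hφz : f z - z ≤ 0 := hzT.2
  have hx₁ltz : x₁ < z := by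
    rcases lt_or_eq_of_le hx₁z with h | h
    · exact h
    · exfalso; rw [← h] at hφz; linarith
  have hIcozI : Set.Ico x₁ z ⊆ Set.Icc (0:ℝ) 1 := fun t ht =>
    ⟨hx₁.1.le.trans ht.1, (ht.2.le.trans hz1)⟩
  have hφpos : ∀ t ∈ Set.Ico x₁ z, 0 < f t - t := by
    intro t ht
    by_contra h
    push_neg at h
    have : t ∈ T := ⟨⟨ht.1, ht.2.le.trans hz1⟩, h⟩
    exact absurd (csInf_le hTbdd this) (not_le.2 ht.2)
  have hfz : f z = z := by
    rcases eq_or_lt_of_le hφz with h | h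
    · linarith
    · exfalso
      have hsub : Set.Icc x₁ z ⊆ Set.Icc (0:ℝ) 1 := Set.Icc_subset_Icc hx₁.1.le hz1
      have hivt := intermediate_value_Icc' hx₁ltz.le ((hφc.mono hsub))
      have h0 : (0:ℝ) ∈ Set.Icc (f z - z) (f x₁ - x₁) := ⟨h.le, hφx₁.le⟩
      obtain ⟨t, ht, htv⟩ := hivt h0
      rcases eq_or_lt_of_le ht.2 with h2 | h2
      · rw [h2] at htv
        exact absurd (show f z - z = 0 from htv) (by linarith)
      · exact absurd htv (ne_of_gt (hφpos t ⟨ht.1, h2⟩))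
  -- orbit stays in [x₁, z)
  have horb : ∀ k : ℕ, f^[k] x₁ ∈ Set.Ico x₁ z := by
    intro k
    induction k with
    | zero => simpa using Set.left_mem_Ico.2 hx₁ltz
    | succ k ih =>
      rw [Function.iterate_succ_apply']
      have hpos := hφpos _ ih
      constructor
      · linarith [ih.1]
      · calc f (f^[k] x₁) < f z := hsm (hIcozI ih) hzI ih.2
          _ = z := hfz
  have hstep : ∀ k : ℕ, f^[k] x₁ ≤ f^[k+1] x₁ := by
    intro k
    rw [Function.iterate_succ_apply']
    linarith [hφpos _ (horb k)]
  have horbmono : Monotone (fun k => f^[k] x₁) := monotone_nat_of_le_succ hstep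
  have horbI : ∀ k : ℕ, f^[k] x₁ ∈ Set.Icc (0:ℝ) 1 := fun k => hIcozI (horb k)
  -- integrability on subintervals of [x₁, z)
  have hint : ∀ a b : ℝ, a ∈ Set.Ico x₁ z → b ∈ Set.Ico x₁ z →
      IntervalIntegrable (fun t => 1 / (f t - t)) MeasureTheory.volume a b := by
    intro a b ha hb
    apply ContinuousOn.intervalIntegrable
    have hsub : Set.uIcc a b ⊆ Set.Ico x₁ z := Set.ordConnected_Ico.uIcc_subset ha hb
    apply ContinuousOn.div continuousOn_const ((hφc.mono (hsub.trans hIcozI)).mono le_rfl)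
    intro t ht
    exact ne_of_gt (hφpos t (hsub ht))
  -- one-step bounds
  have hstepbd : ∀ k : ℕ,
      1 / (1 + M) ≤ (∫ t in (f^[k] x₁)..(f^[k+1] x₁), 1 / (f t - t)) ∧
      (∫ t in (f^[k] x₁)..(f^[k+1] x₁), 1 / (f t - t)) ≤ 1 / (1 + m) := by
    intro k
    set a := f^[k] x₁ with ha
    set b := f^[k+1] x₁ with hb
    have hba : b = f a := by rw [hb, ha, Function.iterate_succ_apply']
    have haIco := horb k
    have hbIco := horb (k+1)
    have haI := horbI k
    have hab : a ≤ b := hstep k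
    have hφa : 0 < f a - a := hφpos a haIco
    have hlen : b - a = f a - a := by rw [hba]
    have hIccsub : Set.Icc a b ⊆ Set.Ico x₁ z :=
      Set.ordConnected_Ico.uIcc_subset haIco hbIco |>.trans' (by rw [Set.uIcc_of_le hab])
    have hbound : ∀ t ∈ Set.Icc a b,
        (1 + m) * (f a - a) ≤ f t - t ∧ f t - t ≤ (1 + M) * (f a - a) := by
      intro t ht
      have htI : t ∈ Set.Icc (0:ℝ) 1 := hIcozI (hIccsub ht)
      have hup := hMVT_up a haI t htI ht.1
      have hlo := hMVT_lo a haI t htI ht.1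
      have hta : t - a ≤ f a - a := by
        have := ht.2; rw [hlen] at *; linarith
      have hta0 : 0 ≤ t - a := by linarith [ht.1]
      constructor
      · nlinarith
      · nlinarith
    have hφapos' : 0 < (1 + m) * (f a - a) := by positivity
    have hintab := hint a b haIco hbIco
    constructor
    · have hle : ∀ t ∈ Set.Icc a b, 1 / ((1 + M) * (f a - a)) ≤ 1 / (f t - t) := by
        intro t ht
        apply one_div_le_one_div_of_le (lt_of_lt_of_le hφapos' ((hbound t ht).1))
        exact (hbound t ht).2
      have := intervalIntegral.integral_mono_on hab
        (intervalIntegrable_const (c := 1 / ((1 + M) * (f a - a)))) hintab hle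
      rw [intervalIntegral.integral_const] at this
      have heq : (b - a) • (1 / ((1 + M) * (f a - a))) = 1 / (1 + M) := by
        rw [smul_eq_mul, hlen]
        field_simp
      linarith [heq ▸ this]
    · have hle : ∀ t ∈ Set.Icc a b, 1 / (f t - t) ≤ 1 / ((1 + m) * (f a - a)) := by
        intro t ht
        exact one_div_le_one_div_of_le hφapos' ((hbound t ht).1)
      have := intervalIntegral.integral_mono_on hab hintab
        (intervalIntegrable_const (c := 1 / ((1 + m) * (f a - a)))) hle
      rw [intervalIntegral.integral_const] at this
      have heq : (b - a) • (1 / ((1 + m) * (f a - a))) = 1 / (1 + m) := by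
        rw [smul_eq_mul, hlen]
        field_simp
      linarith [heq ▸ this]
  -- cumulative bounds by induction
  have hcum : ∀ n : ℕ,
      (n:ℝ) / (1 + M) ≤ (∫ t in x₁..(f^[n] x₁), 1 / (f t - t)) ∧
      (∫ t in x₁..(f^[n] x₁), 1 / (f t - t)) ≤ (n:ℝ) / (1 + m) := by
    intro n
    induction n with
    | zero => simp
    | succ n ih =>
      have hadd : (∫ t in x₁..(f^[n] x₁), 1 / (f t - t)) +
          (∫ t in (f^[n] x₁)..(f^[n+1] x₁), 1 / (f t - t)) =
          (∫ t in x₁..(f^[n+1] x₁), 1 / (f t - t)) :=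
        intervalIntegral.integral_add_adjacent_intervals
          (hint x₁ _ (Set.left_mem_Ico.2 hx₁ltz) (horb n)) (hint _ _ (horb n) (horb (n+1)))
      have hsb := hstepbd n
      push_cast
      rw [← hadd]
      constructor
      · have : ((n:ℝ) + 1) / (1 + M) = (n:ℝ) / (1 + M) + 1 / (1 + M) := by ring
        rw [this]
        exact add_le_add ih.1 hsb.1
      · have : ((n:ℝ) + 1) / (1 + m) = (n:ℝ) / (1 + m) + 1 / (1 + m) := by ring
        rw [this]
        exact add_le_add ih.2 hsb.2
  intro n _
  refine ⟨?_, (hcum n).1, (hcum n).2⟩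
  intro t ht
  apply hφpos
  exact ⟨ht.1, lt_of_le_of_lt ht.2 (horb n).2⟩
end

section
/- Let ω : [0,1] → [0,∞) be a concave modulus of continuity which is strictly positive on (0,1], let ε ∈ (0,1] with ω(ε) < 1, and let Ω : [0, ε·ω(ε)] → [0,ε] be the inverse of the map x ↦ x·ω(x). Let φ : [0,ε] → ℝ be a C¹ function with φ ≥ 0 on [0,ε] and |φ'(u) − φ'(v)| ≤ ω(|u−v|) for all u,v ∈ [0,ε]. Suppose x ∈ (0,ε) satisfies φ(x) > 0, φ(x) ≤ ε·ω(ε), and I_x := [x − Ω(φ(x)), x + Ω(φ(x))] ⊆ [0,ε]. Then (a) |φ'(y)| ≤ 3·ω(Ω(φ(x))) = 3·φ(x)/Ω(φ(x)) for every y ∈ I_x, and (b) φ(y) ≤ 4·φ(x) for every y ∈ I_x. -/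
open Set Filter

/-- **Claim 2.** Let `ω` be a concave modulus of continuity, positive on `(0,1]`, let
`Ω` invert `x ↦ x·ω(x)` on `[0,ε]`, and let `φ` be `C¹` and nonnegative on `[0,ε]` with
`ω`-continuous derivative. If `x ∈ (0,ε)`, `0 < φ(x) ≤ ε·ω(ε)` and
`I_x = [x - Ω(φ(x)), x + Ω(φ(x))] ⊆ [0,ε]`, then
(a) `|φ'(y)| ≤ 3·ω(Ω(φ(x))) = 3·φ(x)/Ω(φ(x))` on `I_x`, and (b) `φ(y) ≤ 4·φ(x)` on `I_x`. -/
theorem derivative_and_value_bound_on_Ix (ω : ℝ → ℝ) (hω : IsModCont ω)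
    (hconc : ConcaveOn ℝ (Set.Icc (0:ℝ) 1) ω)
    (hpos : ∀ x ∈ Set.Ioc (0:ℝ) 1, 0 < ω x)
    (ε : ℝ) (hε0 : 0 < ε) (hε1 : ε ≤ 1) (hωε : ω ε < 1)
    (Ω : ℝ → ℝ) (hΩ : ∀ x ∈ Set.Icc 0 ε, Ω (x * ω x) = x)
    (φ : ℝ → ℝ) (hφC1 : ContDiffOn ℝ 1 φ (Set.Icc 0 ε))
    (hφ0 : ∀ u ∈ Set.Icc 0 ε, 0 ≤ φ u)
    (hφω : ∀ u ∈ Set.Icc 0 ε, ∀ v ∈ Set.Icc 0 ε,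
      |derivWithin φ (Set.Icc 0 ε) u - derivWithin φ (Set.Icc 0 ε) v| ≤ ω |u - v|)
    (x : ℝ) (hx : x ∈ Set.Ioo 0 ε) (hφx : 0 < φ x) (hφxε : φ x ≤ ε * ω ε)
    (hIx : Set.Icc (x - Ω (φ x)) (x + Ω (φ x)) ⊆ Set.Icc 0 ε) :
    (∀ y ∈ Set.Icc (x - Ω (φ x)) (x + Ω (φ x)),
      |derivWithin φ (Set.Icc 0 ε) y| ≤ 3 * ω (Ω (φ x))) ∧
    3 * ω (Ω (φ x)) = 3 * (φ x / Ω (φ x)) ∧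
    (∀ y ∈ Set.Icc (x - Ω (φ x)) (x + Ω (φ x)), φ y ≤ 4 * φ x) := by
  -- Set up `r = Ω (φ x)` via the intermediate value theorem.
  set s : Set ℝ := Set.Icc (0:ℝ) ε with hs
  have hsub1 : s ⊆ Set.Icc (0:ℝ) 1 := Set.Icc_subset_Icc le_rfl hε1
  have hFcont : ContinuousOn (fun a : ℝ => a * ω a) s :=
    continuousOn_id.mul (hω.continuousOn.mono hsub1)
  have hF0 : (0:ℝ) * ω 0 = 0 := by rw [hω.map_zero, mul_zero]
  have hmem : φ x ∈ Set.Icc ((0:ℝ) * ω 0) (ε * ω ε) := by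
    constructor
    · rw [hF0]; exact hφx.le
    · exact hφxε
  obtain ⟨a, ha, haF⟩ := intermediate_value_Icc hε0.le hFcont hmem
  have hr_eq : Ω (φ x) = a := by rw [← haF]; exact hΩ a ha
  set r : ℝ := Ω (φ x) with hrdef
  have hra : r = a := hr_eq
  have hrmem : r ∈ s := hra ▸ ha
  have hrF : r * ω r = φ x := by rw [hra]; exact haF
  have hr_pos : 0 < r := by
    rcases lt_or_eq_of_le hrmem.1 with h | h
    · exact h
    · exfalso; rw [← h, ← hF0] at hrF; simp at hrF
      rw [← hrF] at hφx; exact lt_irrefl _ ((hF0 ▸ hφx) : (0:ℝ) < 0)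
  have hr_le : r ≤ ε := hrmem.2
  have hωr_eq : ω r = φ x / r := by
    field_simp
    linarith [hrF]
  have hωr_nonneg : 0 ≤ ω r := hω.nonneg r (hsub1 hrmem)
  -- basic facts about the interval
  set D : ℝ := derivWithin φ s x with hD
  have hxs : x ∈ s := ⟨hx.1.le, hx.2.le⟩
  have hIne : x - r ≤ x + r := by linarith
  have hdiff : DifferentiableOn ℝ φ s := hφC1.differentiableOn one_ne_zero
  have hxI : x ∈ Set.Icc (x - r) (x + r) := ⟨by linarith, by linarith⟩
  have habs : ∀ y ∈ Set.Icc (x - r) (x + r), |y - x| ≤ r := by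
    intro y hy
    rw [abs_sub_le_iff]
    constructor <;> [linarith [hy.2]; linarith [hy.1]]
  have hmono : ∀ y ∈ Set.Icc (x - r) (x + r), ω (|y - x|) ≤ ω r := by
    intro y hy
    exact hω.monotoneOn ⟨abs_nonneg _, le_trans (le_trans (habs y hy) hr_le) hε1⟩
      ⟨hr_pos.le, hr_le.trans hε1⟩ (habs y hy)
  -- derivative of φ within the subinterval
  have hder : ∀ y ∈ Set.Icc (x - r) (x + r),
      HasDerivWithinAt φ (derivWithin φ s y) (Set.Icc (x - r) (x + r)) y := by
    intro y hy
    exact ((hdiff y (hIx hy)).hasDerivWithinAt).mono hIx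
  -- key estimate : |φ y - φ x - D (y - x)| ≤ ω r * |y - x| on I_x
  have hkey : ∀ y ∈ Set.Icc (x - r) (x + r),
      |φ y - D * y - (φ x - D * x)| ≤ ω r * |y - x| := by
    intro y hy
    have hconv : Convex ℝ (Set.Icc (x - r) (x + r)) := convex_Icc _ _
    have h := hconv.norm_image_sub_le_of_norm_hasDerivWithin_le
      (f := fun u => φ u - D * u) (f' := fun u => derivWithin φ s u - D)
      (C := ω r) (fun u hu => (hder u hu).sub
        (by simpa using ((hasDerivWithinAt_id u (Set.Icc (x - r) (x + r))).const_mul D)))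
      (fun u hu => by
        rw [Real.norm_eq_abs]
        exact le_trans (hφω u (hIx hu) x hxs) (hmono u hu))
      hxI hy
    simpa [Real.norm_eq_abs] using h
  -- bound |D| ≤ 2 ω r
  have hDbound : |D| ≤ 2 * ω r := by
    have hp : x + r ∈ Set.Icc (x - r) (x + r) := ⟨hIne, le_rfl⟩
    have hm : x - r ∈ Set.Icc (x - r) (x + r) := ⟨le_rfl, hIne⟩
    have h1 := hkey (x + r) hp
    have h2 := hkey (x - r) hm
    have hφp : 0 ≤ φ (x + r) := hφ0 _ (hIx hp)
    have hφm : 0 ≤ φ (x - r) := hφ0 _ (hIx hm)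
    have e1 : |x + r - x| = r := by rw [show x + r - x = r by ring, abs_of_pos hr_pos]
    have e2 : |x - r - x| = r := by
      rw [show x - r - x = -r by ring, abs_neg, abs_of_pos hr_pos]
    rw [e1] at h1
    rw [e2] at h2
    have u1 : φ (x + r) - D * (x + r) - (φ x - D * x) ≤ ω r * r := le_of_abs_le h1
    have u2 : φ (x - r) - D * (x - r) - (φ x - D * x) ≤ ω r * r := le_of_abs_le h2
    rw [abs_le]
    constructor
    · have hh : -(2 * ω r) * r ≤ D * r := by nlinarith [hrF]
      exact le_of_mul_le_mul_right hh hr_pos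
    · have hh : D * r ≤ 2 * ω r * r := by nlinarith [hrF]
      exact le_of_mul_le_mul_right hh hr_pos
  -- part (a)
  have parta : ∀ y ∈ Set.Icc (x - r) (x + r), |derivWithin φ s y| ≤ 3 * ω r := by
    intro y hy
    have h1 : |derivWithin φ s y - D| ≤ ω r :=
      le_trans (hφω y (hIx hy) x hxs) (hmono y hy)
    calc |derivWithin φ s y| ≤ |derivWithin φ s y - D| + |D| := by
          simpa using abs_add_le (derivWithin φ s y - D) D
      _ ≤ ω r + 2 * ω r := add_le_add h1 hDbound
      _ = 3 * ω r := by ring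
  refine ⟨parta, by rw [hωr_eq], ?_⟩
  -- part (b)
  intro y hy
  have hconv : Convex ℝ (Set.Icc (x - r) (x + r)) := convex_Icc _ _
  have h := hconv.norm_image_sub_le_of_norm_hasDerivWithin_le
    (f := φ) (f' := fun u => derivWithin φ s u) (C := 3 * ω r)
    hder (fun u hu => by rw [Real.norm_eq_abs]; exact parta u hu) hxI hy
  rw [Real.norm_eq_abs, Real.norm_eq_abs] at h
  have h3 : 3 * ω r * |y - x| ≤ 3 * ω r * r :=
    mul_le_mul_of_nonneg_left (habs y hy) (by positivity)
  have hub : φ y - φ x ≤ 3 * ω r * r := le_trans (le_trans (le_abs_self _) h) h3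
  nlinarith [hrF]
end

section
/- Let ω : [0,1] → [0,∞) be a concave, strictly increasing modulus of continuity, and let f ∈ Diff₀[0,1] satisfy |f'(u) − f'(v)| ≤ ω(|u−v|) for all u,v ∈ [0,1], and f(x) > x for all x in some interval (0, ε). Let φ(x) = f(x) − x and define the orbit x_{k+1} = f(x_k). Then there exist δ ∈ (0, ε) and a constant C(f) > 0 such that: whenever x₁ ∈ (0,δ) and n ≥ 2 is such that x₁, x₂, …, x_n all lie in (0,δ), one has |log (fⁿ)'(x₁) − log( φ(x_n)/φ(x₁) )| ≤ C(f) · n · ω(1/n). -/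
open Set Filter

section aux
variable {ω : ℝ → ℝ}

-- subadditive iteration
lemma omega_nsmul (hcont : ω 0 = 0)
    (hsub : ∀ a b : ℝ, 0 ≤ a → 0 ≤ b → a + b ≤ 1 → ω (a + b) ≤ ω a + ω b)
    (t : ℝ) (ht : 0 ≤ t) :
    ∀ m : ℕ, (m : ℝ) * t ≤ 1 → ω ((m : ℝ) * t) ≤ m * ω t := by
  intro m
  induction m with
  | zero => intro _; simp [hcont]
  | succ k ih =>
    intro hle
    have hkt : (k : ℝ) * t ≤ 1 := by
      refine le_trans ?_ hle
      have : (k : ℝ) ≤ (k + 1 : ℕ) := by exact_mod_cast Nat.le_succ k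
      nlinarith [Nat.cast_nonneg (α := ℝ) k]
    have h0 : (0:ℝ) ≤ (k : ℝ) * t := mul_nonneg (Nat.cast_nonneg k) ht
    have := hsub ((k:ℝ) * t) t h0 ht (by push_cast at hle ⊢; linarith)
    have hk := ih hkt
    push_cast
    push_cast at this
    rw [add_mul, one_mul]
    calc ω (↑k * t + t) ≤ ω (↑k * t) + ω t := this
      _ ≤ ↑k * ω t + ω t := by linarith
      _ ≤ (↑k + 1) * ω t := by ring_nf; rfl

-- |log a - log b| ≤ |a - b| / m for m ≤ a, m ≤ b, 0 < m
lemma abs_log_sub_log_le {a b m : ℝ} (hm : 0 < m) (ha : m ≤ a) (hb : m ≤ b) :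
    |Real.log a - Real.log b| ≤ |a - b| / m := by
  have ha0 : 0 < a := lt_of_lt_of_le hm ha
  have hb0 : 0 < b := lt_of_lt_of_le hm hb
  have key : ∀ x y : ℝ, 0 < x → m ≤ y → Real.log x - Real.log y ≤ |x - y| / m := by
    intro x y hx hy
    have hy0 : 0 < y := lt_of_lt_of_le hm hy
    have h1 : Real.log x - Real.log y = Real.log (x / y) := (Real.log_div hx.ne' hy0.ne').symm
    rw [h1]
    have h2 : Real.log (x / y) ≤ x / y - 1 := Real.log_le_sub_one_of_pos (div_pos hx hy0)
    have h3 : x / y - 1 = (x - y) / y := by field_simp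
    rcases le_total x y with h | h
    · have : Real.log (x / y) ≤ 0 := by
        rw [h1.symm]; linarith [Real.log_le_log hx h]
      exact this.trans (div_nonneg (abs_nonneg _) hm.le)
    · have h4 : (x - y) / y ≤ (x - y) / m := by
        apply div_le_div_of_nonneg_left (by linarith) hm hy
      have h5 : (x - y) / m ≤ |x - y| / m := by
        gcongr
        exact le_abs_self _
      linarith
  rw [abs_sub_le_iff]
  refine ⟨key a b ha0 hb, ?_⟩
  rw [abs_sub_comm a b]
  exact key b a hb0 ha

lemma omega_ceil (hcont : ω 0 = 0)
    (hsub : ∀ a b : ℝ, 0 ≤ a → 0 ≤ b → a + b ≤ 1 → ω (a + b) ≤ ω a + ω b)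
    (hmono : MonotoneOn ω (Set.Icc (0:ℝ) 1)) (hnn : ∀ x ∈ Set.Icc (0:ℝ) 1, 0 ≤ ω x)
    {d : ℝ} (hd0 : 0 ≤ d) (hd1 : d ≤ 1) {n : ℕ} (hn : 1 ≤ n) :
    ω d ≤ ((n:ℝ) * d + 1) * ω (1 / n) := by
  have hn0 : (0:ℝ) < n := by exact_mod_cast hn
  set m : ℕ := ⌈(n:ℝ) * d⌉₊ with hm
  have hmle : (m : ℝ) ≤ n := by
    have : (n:ℝ) * d ≤ n := by nlinarith
    exact_mod_cast Nat.ceil_le.mpr (by exact_mod_cast this)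
  have hdm : d ≤ (m : ℝ) * (1 / n) := by
    rw [mul_one_div, le_div_iff₀ hn0, mul_comm]
    exact Nat.le_ceil _
  have h1n : (0:ℝ) ≤ 1 / n := by positivity
  have hmn1 : (m : ℝ) * (1 / n) ≤ 1 := by
    rw [mul_one_div, div_le_one hn0]; exact hmle
  have h1 : ω d ≤ ω ((m : ℝ) * (1 / n)) :=
    hmono ⟨hd0, hd1⟩ ⟨by positivity, hmn1⟩ hdm
  have h2 : ω ((m : ℝ) * (1 / n)) ≤ (m : ℝ) * ω (1 / n) :=
    omega_nsmul hcont hsub _ h1n m hmn1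
  have h3 : (m : ℝ) ≤ (n:ℝ) * d + 1 := le_of_lt (Nat.ceil_lt_add_one (by positivity))
  have h4 : 0 ≤ ω (1 / n) := hnn _ ⟨h1n, by rw [div_le_one hn0]; exact_mod_cast hn⟩
  nlinarith

lemma iterate_mapsTo {f : ℝ → ℝ} (h : Set.MapsTo f (Set.Icc (0:ℝ) 1) (Set.Icc (0:ℝ) 1)) :
    ∀ n, Set.MapsTo (f^[n]) (Set.Icc (0:ℝ) 1) (Set.Icc (0:ℝ) 1) := by
  intro n
  induction n with
  | zero => simp [Set.MapsTo]
  | succ k ih => rw [Function.iterate_succ']; exact h.comp ih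

lemma hasDerivWithinAt_iterate {f : ℝ → ℝ}
    (hmaps : Set.MapsTo f (Set.Icc (0:ℝ) 1) (Set.Icc (0:ℝ) 1))
    (hdiff : DifferentiableOn ℝ f (Set.Icc (0:ℝ) 1)) (n : ℕ) :
    ∀ x ∈ Set.Icc (0:ℝ) 1, HasDerivWithinAt (f^[n])
      (∏ k ∈ Finset.range n, derivWithin f (Set.Icc (0:ℝ) 1) (f^[k] x))
      (Set.Icc (0:ℝ) 1) x := by
  induction n with
  | zero =>
    intro x hx
    simpa using (hasDerivWithinAt_id x (Set.Icc (0:ℝ) 1))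
  | succ k ih =>
    intro x hx
    rw [Function.iterate_succ', Finset.prod_range_succ]
    have hfk : f^[k] x ∈ Set.Icc (0:ℝ) 1 := iterate_mapsTo hmaps k hx
    have hdf : HasDerivWithinAt f (derivWithin f (Set.Icc (0:ℝ) 1) (f^[k] x))
        (Set.Icc (0:ℝ) 1) (f^[k] x) := (hdiff _ hfk).hasDerivWithinAt
    have := HasDerivWithinAt.comp x hdf (ih x hx) (iterate_mapsTo hmaps k)
    simpa [mul_comm] using this


set_option maxHeartbeats 1000000

/-- **Lemma 2.** Let `ω` be a concave strictly increasing modulus of continuity and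
`f ∈ Diff₀[0,1]` with `|f'(u) - f'(v)| ≤ ω(|u-v|)` and `f(x) > x` on `(0,ε)`. Then there are
`δ ∈ (0,ε)` and `C(f) > 0` such that whenever the orbit points `x₁, …, x_n` all lie in
`(0,δ)` (with `n ≥ 2`), `|log (fⁿ)'(x₁) - log (φ(x_n)/φ(x₁))| ≤ C(f) · n · ω(1/n)`. -/
theorem log_deriv_iterate_approx (ω : ℝ → ℝ) (hω : IsModCont ω)
    (hconc : ConcaveOn ℝ (Set.Icc (0:ℝ) 1) ω)
    (hsm : StrictMonoOn ω (Set.Icc (0:ℝ) 1))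
    (f g : ℝ → ℝ) (hf : IsDiff01 f g)
    (hfω : ∀ u ∈ Set.Icc (0:ℝ) 1, ∀ v ∈ Set.Icc (0:ℝ) 1,
      |derivWithin f (Set.Icc (0:ℝ) 1) u - derivWithin f (Set.Icc (0:ℝ) 1) v| ≤ ω |u - v|)
    (ε : ℝ) (hε0 : 0 < ε) (hε1 : ε ≤ 1)
    (hfx : ∀ x ∈ Set.Ioo 0 ε, x < f x) :
    ∃ δ : ℝ, 0 < δ ∧ δ < ε ∧ ∃ C > 0,
      ∀ x₁ ∈ Set.Ioo 0 δ, ∀ n : ℕ, 2 ≤ n →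
        (∀ k < n, f^[k] x₁ ∈ Set.Ioo 0 δ) →
        |Real.log (derivWithin (f^[n]) (Set.Icc (0:ℝ) 1) x₁) -
            Real.log ((f (f^[n-1] x₁) - f^[n-1] x₁) / (f x₁ - x₁))|
          ≤ C * n * ω (1 / (n:ℝ)) := by
  set I : Set ℝ := Set.Icc (0:ℝ) 1 with hI
  set F : ℝ → ℝ := derivWithin f I with hF
  have hUD : UniqueDiffOn ℝ I := uniqueDiffOn_Icc one_pos
  have hFcont : ContinuousOn F I := hf.contDiffOn.continuousOn_derivWithin hUD le_rfl
  obtain ⟨xm, hxmI, hxm⟩ := isCompact_Icc.exists_isMinOn (Set.nonempty_Icc.mpr zero_le_one) hFcont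
  obtain ⟨xM, hxMI, hxM⟩ := isCompact_Icc.exists_isMaxOn (Set.nonempty_Icc.mpr zero_le_one) hFcont
  set m : ℝ := F xm with hm
  set M : ℝ := F xM with hMdef
  have hm0 : 0 < m := hf.deriv_pos xm hxmI
  have hmF : ∀ y ∈ I, m ≤ F y := fun y hy => hxm hy
  have hFM : ∀ y ∈ I, F y ≤ M := fun y hy => hxM hy
  set K : ℝ := |Real.log m| + |Real.log M| with hK
  have hK0 : 0 ≤ K := by positivity
  have hlogK : ∀ y ∈ I, |Real.log (F y)| ≤ K := by
    intro y hy
    rw [abs_le]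
    constructor
    · have := Real.log_le_log hm0 (hmF y hy)
      have h2 : -|Real.log m| ≤ Real.log m := neg_abs_le _
      have h3 : (0:ℝ) ≤ |Real.log M| := abs_nonneg _
      rw [hK]; linarith
    · have h1 : Real.log (F y) ≤ Real.log M :=
        Real.log_le_log (lt_of_lt_of_le hm0 (hmF y hy)) (hFM y hy)
      have h2 : Real.log M ≤ |Real.log M| := le_abs_self _
      have h3 : (0:ℝ) ≤ |Real.log m| := abs_nonneg _
      rw [hK]; linarith
  have hω10 : 0 < ω 1 := by
    have := hsm (Set.mem_Icc.mpr ⟨le_rfl, zero_le_one⟩) (Set.mem_Icc.mpr ⟨zero_le_one, le_rfl⟩)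
      zero_lt_one
    rwa [hω.map_zero] at this
  set δ : ℝ := min ε 1 / 2 with hδ
  have hδ0 : 0 < δ := by positivity
  have hδε : δ < ε := by
    rw [hδ]
    have : min ε 1 ≤ ε := min_le_left _ _
    linarith
  have hδ1 : δ ≤ 1 / 2 := by
    rw [hδ]
    have : min ε 1 ≤ 1 := min_le_right _ _
    linarith
  set C : ℝ := 2 / m + K / ω 1 + 1 with hC
  have hC0 : 0 < C := by positivity
  refine ⟨δ, hδ0, hδε, C, hC0, ?_⟩
  intro x₁ hx₁ n hn2 horb
  have hnpos : 0 < (n:ℝ) := by positivity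
  set w : ℝ := ω (1 / (n:ℝ)) with hw
  have h1nI : (1 : ℝ) / n ∈ I := ⟨by positivity, by
    rw [div_le_one hnpos]; exact_mod_cast le_trans (by norm_num) hn2⟩
  have hw0 : 0 ≤ w := hω.nonneg _ h1nI
  have hω1nw : ω 1 ≤ n * w := by
    have h := omega_nsmul hω.map_zero hω.subadd (1 / (n:ℝ)) (by positivity) n
      (by rw [mul_one_div, div_self hnpos.ne']) 
    rwa [mul_one_div, div_self hnpos.ne'] at h
  -- orbit facts
  have hIoo : ∀ k < n, f^[k] x₁ ∈ Set.Ioo (0:ℝ) δ := horb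
  have hIccOf : ∀ {y : ℝ}, y ∈ Set.Ioo (0:ℝ) δ → y ∈ I := by
    intro y hy
    exact ⟨hy.1.le, le_trans hy.2.le (by linarith)⟩
  have hxI : ∀ k < n, f^[k] x₁ ∈ I := fun k hk => hIccOf (hIoo k hk)
  set d : ℕ → ℝ := fun j => f^[j+1] x₁ - f^[j] x₁ with hd
  have hdpos : ∀ k < n, 0 < d k := by
    intro k hk
    have h1 : f^[k] x₁ ∈ Set.Ioo 0 ε := by
      have := hIoo k hk
      exact ⟨this.1, lt_trans this.2 hδε⟩
    have := hfx _ h1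
    simp only [hd, Function.iterate_succ_apply']
    linarith
  have hdlt : ∀ k, k + 1 < n → d k < δ := by
    intro k hk
    have h1 := hIoo k (by omega)
    have h2 := hIoo (k+1) hk
    simp only [hd]
    linarith [h1.1, h2.2]
  -- MVT choices
  have hmvt : ∀ k : ℕ, ∃ c : ℝ, k + 1 < n →
      c ∈ Set.Ioo (f^[k] x₁) (f^[k+1] x₁) ∧ d (k+1) = F c * d k := by
    intro k
    by_cases hk : k + 1 < n
    · have ha := hIoo k (by omega)
      have hb := hIoo (k+1) hk
      have hab : f^[k] x₁ < f^[k+1] x₁ := by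
        have := hdpos k (by omega)
        simp only [hd] at this; linarith
      have hsub : Set.Icc (f^[k] x₁) (f^[k+1] x₁) ⊆ I := by
        intro y hy
        exact ⟨le_trans ha.1.le hy.1, le_trans hy.2 (by linarith [hb.2])⟩
      have hderiv : ∀ x ∈ Set.Ioo (f^[k] x₁) (f^[k+1] x₁), HasDerivAt f (F x) x := by
        intro x hx
        have hxIoo : x ∈ Set.Ioo (0:ℝ) 1 := ⟨lt_trans ha.1 hx.1,
          lt_of_lt_of_le (lt_trans hx.2 hb.2) (by linarith)⟩
        have hxI' : x ∈ I := ⟨hxIoo.1.le, hxIoo.2.le⟩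
        exact ((hf.contDiffOn.differentiableOn one_ne_zero x hxI').hasDerivWithinAt).hasDerivAt
          (Icc_mem_nhds hxIoo.1 hxIoo.2)
      obtain ⟨c, hc, hceq⟩ := exists_hasDerivAt_eq_slope f F hab
        (hf.contDiffOn.continuousOn.mono hsub) hderiv
      refine ⟨c, fun _ => ⟨hc, ?_⟩⟩
      have hne : f^[k+1] x₁ - f^[k] x₁ ≠ 0 := (hdpos k (by omega)).ne'
      simp only [hd]
      rw [hceq, div_mul_cancel₀ _ hne, Function.iterate_succ_apply' f (k+1),
        Function.iterate_succ_apply' f k]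
    · exact ⟨0, fun h => absurd h hk⟩
  choose θ hθ using hmvt
  have hθI : ∀ k, k + 1 < n → θ k ∈ I := by
    intro k hk
    have h1 := (hθ k hk).1
    have ha := hIoo k (by omega)
    have hb := hIoo (k+1) hk
    exact ⟨le_trans ha.1.le h1.1.le, le_trans h1.2.le (by linarith [hb.2])⟩
  -- product formula for displacements
  have hdprod : ∀ j, j < n → d j = d 0 * ∏ k ∈ Finset.range j, F (θ k) := by
    intro j
    induction j with
    | zero => intro _; simp
    | succ i ih =>
      intro hi
      rw [Finset.prod_range_succ, (hθ i hi).2, ih (by omega)]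
      ring
  -- derivative of iterate
  have hx₁I : x₁ ∈ I := by
    have := hxI 0 (by omega); simpa using this
  have hlog1 : Real.log (derivWithin (f^[n]) I x₁)
      = ∑ k ∈ Finset.range n, Real.log (F (f^[k] x₁)) := by
    have hEq := (hasDerivWithinAt_iterate hf.mapsTo
      (hf.contDiffOn.differentiableOn one_ne_zero) n x₁ hx₁I).derivWithin (hUD x₁ hx₁I)
    rw [hEq, Real.log_prod]
    intro k hk
    exact (hf.deriv_pos _ (hxI k (Finset.mem_range.mp hk))).ne'
  have hd00 : 0 < d 0 := hdpos 0 (by omega)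
  have hθpos : ∀ k ∈ Finset.range (n-1), 0 < F (θ k) := by
    intro k hk
    exact hf.deriv_pos _ (hθI k (by have := Finset.mem_range.mp hk; omega))
  have harg : (f (f^[n-1] x₁) - f^[n-1] x₁) / (f x₁ - x₁)
      = ∏ k ∈ Finset.range (n-1), F (θ k) := by
    have h1 : f (f^[n-1] x₁) - f^[n-1] x₁ = d (n-1) := by
      simp only [hd]
      rw [← Function.iterate_succ_apply' f (n-1)]
    have h2 : f x₁ - x₁ = d 0 := by simp [hd]
    rw [h1, h2, hdprod (n-1) (by omega), mul_div_cancel_left₀ _ hd00.ne']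
  have hlog2 : Real.log ((f (f^[n-1] x₁) - f^[n-1] x₁) / (f x₁ - x₁))
      = ∑ k ∈ Finset.range (n-1), Real.log (F (θ k)) := by
    rw [harg, Real.log_prod]
    intro k hk
    exact (hθpos k hk).ne'
  rw [hlog1, hlog2]
  have hsplit : ∑ k ∈ Finset.range n, Real.log (F (f^[k] x₁))
      = ∑ k ∈ Finset.range (n-1), Real.log (F (f^[k] x₁)) + Real.log (F (f^[n-1] x₁)) := by
    have hn' : n = (n-1) + 1 := by omega
    conv_lhs => rw [hn']
    rw [Finset.sum_range_succ]
  -- per-term bound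
  have hperterm : ∀ k ∈ Finset.range (n-1),
      |Real.log (F (f^[k] x₁)) - Real.log (F (θ k))| ≤ ((n:ℝ) * d k + 1) * (w / m) := by
    intro k hk
    have hk' : k + 1 < n := by have := Finset.mem_range.mp hk; omega
    have hθk := (hθ k hk').1
    have hxk := hxI k (by omega)
    have hθkI := hθI k hk'
    have hdk0 : 0 < d k := hdpos k (by omega)
    have hdk1 : d k ≤ 1 := by linarith [hdlt k hk', hδ1]
    have h1 : |Real.log (F (f^[k] x₁)) - Real.log (F (θ k))|
        ≤ |F (f^[k] x₁) - F (θ k)| / m :=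
      abs_log_sub_log_le hm0 (hmF _ hxk) (hmF _ hθkI)
    have h2 : |F (f^[k] x₁) - F (θ k)| ≤ ω |f^[k] x₁ - θ k| := hfω _ hxk _ hθkI
    have h3 : |f^[k] x₁ - θ k| ≤ d k := by
      rw [abs_sub_comm, abs_of_pos (by linarith [hθk.1, hθk.2] : 0 < θ k - f^[k] x₁)]
      simp only [hd]
      linarith [hθk.2]
    have h4 : ω |f^[k] x₁ - θ k| ≤ ω (d k) := by
      apply hω.monotoneOn ⟨abs_nonneg _, le_trans h3 hdk1⟩ ⟨hdk0.le, hdk1⟩ h3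
    have h5 : ω (d k) ≤ ((n:ℝ) * d k + 1) * w :=
      omega_ceil hω.map_zero hω.subadd hω.monotoneOn hω.nonneg hdk0.le hdk1 (by omega)
    calc |Real.log (F (f^[k] x₁)) - Real.log (F (θ k))|
        ≤ |F (f^[k] x₁) - F (θ k)| / m := h1
      _ ≤ ω (d k) / m := by
          gcongr
          exact le_trans h2 h4
      _ = ω (d k) * (1 / m) := by ring
      _ ≤ (((n:ℝ) * d k + 1) * w) * (1 / m) := by
          apply mul_le_mul_of_nonneg_right h5 (by positivity)
      _ = ((n:ℝ) * d k + 1) * (w / m) := by ring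
  -- telescoping sum of displacements
  have hsum_d : ∑ k ∈ Finset.range (n-1), d k = f^[n-1] x₁ - x₁ := by
    have := Finset.sum_range_sub (fun j => f^[j] x₁) (n-1)
    simpa [hd] using this
  have hS0 : 0 ≤ f^[n-1] x₁ - x₁ := by
    rw [← hsum_d]
    exact Finset.sum_nonneg fun k hk => (hdpos k (by have := Finset.mem_range.mp hk; omega)).le
  have hS1 : f^[n-1] x₁ - x₁ ≤ 1 := by
    have h1 := hIoo (n-1) (by omega)
    have h2 := hx₁.1
    linarith [h1.2, hδ1]
  have hKbd : |Real.log (F (f^[n-1] x₁))| ≤ K := hlogK _ (hxI (n-1) (by omega))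
  have hcast : ((n - 1 : ℕ) : ℝ) = (n : ℝ) - 1 := by
    have : (1:ℕ) ≤ n := by omega
    push_cast [this]
    ring
  calc |∑ k ∈ Finset.range n, Real.log (F (f^[k] x₁))
        - ∑ k ∈ Finset.range (n-1), Real.log (F (θ k))|
      = |(∑ k ∈ Finset.range (n-1),
            (Real.log (F (f^[k] x₁)) - Real.log (F (θ k)))) + Real.log (F (f^[n-1] x₁))| := by
        rw [hsplit, Finset.sum_sub_distrib]
        ring_nf
    _ ≤ (∑ k ∈ Finset.range (n-1),
            |Real.log (F (f^[k] x₁)) - Real.log (F (θ k))|) + |Real.log (F (f^[n-1] x₁))| := by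
        refine le_trans (abs_add_le _ _) ?_
        gcongr
        exact Finset.abs_sum_le_sum_abs _ _
    _ ≤ (∑ k ∈ Finset.range (n-1), ((n:ℝ) * d k + 1) * (w / m)) + K := by
        exact add_le_add (Finset.sum_le_sum hperterm) hKbd
    _ = ((n:ℝ) * (f^[n-1] x₁ - x₁) + ((n:ℝ) - 1)) * (w / m) + K := by
        rw [← Finset.sum_mul, Finset.sum_add_distrib, ← Finset.mul_sum, hsum_d]
        simp [Finset.card_range, hcast]
    _ ≤ 2 * (n:ℝ) * (w / m) + K := by
        have hwm : 0 ≤ w / m := by positivity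
        have : (n:ℝ) * (f^[n-1] x₁ - x₁) + ((n:ℝ) - 1) ≤ 2 * n := by nlinarith
        nlinarith
    _ ≤ C * n * w := by
        have hKle : K ≤ (K / ω 1) * ((n:ℝ) * w) := by
          rw [div_mul_eq_mul_div, le_div_iff₀ hω10]
          exact mul_le_mul_of_nonneg_left hω1nw hK0
        have h1 : 2 * (n:ℝ) * (w / m) = (2 / m) * ((n:ℝ) * w) := by ring
        have h2 : C * n * w = (2 / m) * ((n:ℝ) * w) + (K / ω 1) * ((n:ℝ) * w) + (n:ℝ) * w := by
          rw [hC]; ring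
        have h3 : 0 ≤ (n:ℝ) * w := by positivity
        linarith
end aux
end

section
/- Let ω : [0,1] → [0,∞) be a modulus of continuity and set φ₀(x) = ∫₀^x ω(t) dt for x ∈ [0,1]. Let b ∈ (0,1] and let φ : [0,b] → ℝ be a C¹ function with φ(0) = 0, φ ≥ 0 on [0,b], and |φ'(u) − φ'(v)| ≤ ω(|u−v|) for all u,v ∈ [0,b], and with |φ'(t)| ≤ ω(t) for all t ∈ [0,b]. If s ∈ (0,b] and s₀ ∈ (0,b] satisfy φ(s) = φ₀(s₀), then φ'(s) ≤ 2·ω(s₀). -/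
open Set Filter

/-- **Claim 6.** Let `φ₀(x) = ∫₀^x ω(t) dt` and let `φ` be a `C¹` function on `[0,b]` with
`φ(0) = 0`, `φ ≥ 0`, `ω`-continuous derivative and `|φ'(t)| ≤ ω(t)`. If `φ(s) = φ₀(s₀)`
for `s, s₀ ∈ (0,b]`, then `φ'(s) ≤ 2·ω(s₀)`. -/
theorem deriv_comparison_model (ω : ℝ → ℝ) (hω : IsModCont ω)
    (φ₀ : ℝ → ℝ) (hφ₀ : ∀ x, φ₀ x = ∫ t in (0:ℝ)..x, ω t)
    (b : ℝ) (hb0 : 0 < b) (hb1 : b ≤ 1)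
    (φ : ℝ → ℝ) (hφC1 : ContDiffOn ℝ 1 φ (Set.Icc 0 b))
    (hφzero : φ 0 = 0)
    (hφ0 : ∀ u ∈ Set.Icc 0 b, 0 ≤ φ u)
    (hφω : ∀ u ∈ Set.Icc 0 b, ∀ v ∈ Set.Icc 0 b,
      |derivWithin φ (Set.Icc 0 b) u - derivWithin φ (Set.Icc 0 b) v| ≤ ω |u - v|)
    (hφ' : ∀ t ∈ Set.Icc 0 b, |derivWithin φ (Set.Icc 0 b) t| ≤ ω t)
    (s s₀ : ℝ) (hs : s ∈ Set.Ioc 0 b) (hs₀ : s₀ ∈ Set.Ioc 0 b)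
    (heq : φ s = φ₀ s₀) :
    derivWithin φ (Set.Icc 0 b) s ≤ 2 * ω s₀ := by
  obtain ⟨hs0, hsb⟩ := hs
  obtain ⟨hs₀0, hs₀b⟩ := hs₀
  set D := derivWithin φ (Set.Icc 0 b) with hD
  have hs₀1 : s₀ ≤ 1 := hs₀b.trans hb1
  have hωs₀nn : 0 ≤ ω s₀ := hω.nonneg s₀ ⟨hs₀0.le, hs₀1⟩
  by_cases hcase : s ≤ s₀
  · have h1 : D s ≤ |D s| := le_abs_self _
    have h2 := hφ' s ⟨hs0.le, hsb⟩
    have h3 : ω s ≤ ω s₀ := hω.monotoneOn ⟨hs0.le, (hsb.trans hb1)⟩ ⟨hs₀0.le, hs₀1⟩ hcase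
    linarith
  · push_neg at hcase
    have ha0 : 0 ≤ s - s₀ := by linarith
    have hab : s - s₀ ≤ s := by linarith
    have hω.continuousOnD : ContinuousOn D (Set.Icc 0 b) :=
      hφC1.continuousOn_derivWithin (uniqueDiffOn_Icc hb0) le_rfl
    have hsub : Set.Icc (s - s₀) s ⊆ Set.Icc 0 b := Set.Icc_subset_Icc ha0 hsb
    -- FTC
    have hFTC : ∫ u in (s - s₀)..s, D u = φ s - φ (s - s₀) := by
      apply intervalIntegral.integral_eq_sub_of_hasDerivAt_of_le hab
        (hφC1.continuousOn.mono hsub)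
      · intro x hx
        have hx' : Set.Icc 0 b ∈ nhds x :=
          Icc_mem_nhds (by linarith [hx.1]) (lt_of_lt_of_le hx.2 hsb)
        exact ((hφC1.differentiableOn one_ne_zero x (hsub (Set.mem_Icc.mpr ⟨hx.1.le, hx.2.le⟩))).hasDerivWithinAt).hasDerivAt hx'
      · exact ((hω.continuousOnD.mono hsub).mono (by rw [Set.uIcc_of_le hab])).intervalIntegrable
    -- integrability of the lower bound function
    have hω.continuousOnlow : ContinuousOn (fun u => ω (s - u)) (Set.Icc (s - s₀) s) := by
      apply hω.continuousOn.comp (Continuous.continuousOn (by continuity))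
      intro u hu
      exact ⟨by linarith [hu.2], by linarith [hu.1]⟩
    have hint1 : IntervalIntegrable (fun u => D s - ω (s - u)) MeasureTheory.volume (s - s₀) s :=
      ((continuousOn_const.sub hω.continuousOnlow).mono (by rw [Set.uIcc_of_le hab])).intervalIntegrable
    have hint2 : IntervalIntegrable D MeasureTheory.volume (s - s₀) s :=
      ((hω.continuousOnD.mono hsub).mono (by rw [Set.uIcc_of_le hab])).intervalIntegrable
    have hmono2 : ∫ u in (s - s₀)..s, (D s - ω (s - u)) ≤ ∫ u in (s - s₀)..s, D u := by
      apply intervalIntegral.integral_mono_on hab hint1 hint2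
      intro u hu
      have h := hφω s ⟨hs0.le, hsb⟩ u ⟨by linarith [hu.1], hu.2.trans hsb⟩
      rw [abs_of_nonneg (by linarith [hu.2] : (0:ℝ) ≤ s - u)] at h
      linarith [(abs_le.mp h).2]
    -- compute LHS integral
    have hintω : IntervalIntegrable (fun u => ω (s - u)) MeasureTheory.volume (s - s₀) s :=
      (hω.continuousOnlow.mono (by rw [Set.uIcc_of_le hab])).intervalIntegrable
    have hcomp : ∫ u in (s - s₀)..s, ω (s - u) = ∫ t in (0:ℝ)..s₀, ω t := by
      rw [intervalIntegral.integral_comp_sub_left (fun t => ω t) s]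
      norm_num
    have hLHS : ∫ u in (s - s₀)..s, (D s - ω (s - u)) = s₀ * D s - φ₀ s₀ := by
      rw [intervalIntegral.integral_sub intervalIntegrable_const hintω,
        intervalIntegral.integral_const, hcomp, hφ₀]
      simp [smul_eq_mul]
    -- φ₀ s₀ ≤ s₀ * ω s₀
    have hφ₀le : φ₀ s₀ ≤ s₀ * ω s₀ := by
      rw [hφ₀]
      calc ∫ t in (0:ℝ)..s₀, ω t ≤ ∫ t in (0:ℝ)..s₀, ω s₀ := by
            apply intervalIntegral.integral_mono_on hs₀0.le
              (((hω.continuousOn.mono (Set.Icc_subset_Icc le_rfl hs₀1)).mono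
                (by rw [Set.uIcc_of_le hs₀0.le])).intervalIntegrable)
              intervalIntegrable_const
            intro t ht
            exact hω.monotoneOn ⟨ht.1, ht.2.trans hs₀1⟩ ⟨hs₀0.le, hs₀1⟩ ht.2
        _ = s₀ * ω s₀ := by simp [smul_eq_mul]
    have hφa : 0 ≤ φ (s - s₀) := hφ0 _ ⟨ha0, by linarith⟩
    have hφs : φ s ≤ φ₀ s₀ := le_of_eq heq
    have key : s₀ * D s ≤ s₀ * (2 * ω s₀) := by nlinarith [hmono2, hLHS ▸ hmono2]
    exact (mul_le_mul_iff_right₀ hs₀0).mp key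
end
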